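/- arXiv:1809.06368 — 10 statements merged into one kernel-verified Lean document; each statement's English description precedes it below -/
import Mathlib

section
/- The plasma dispersion function satisfies the derivative identity Z′(ζ) = −2(1 + ζ Z(ζ)): the function Z is complex differentiable at every ζ in the open upper half plane {Im ζ > 0}, and its derivative there equals −2(1 + ζ Z(ζ)). -/
open MeasureTheory

lemma pz_im_le (z : ℂ) (x : ℝ) : z.im ≤ ‖(x:ℂ) - z‖ := by
  have h := Complex.abs_im_le_norm ((x:ℂ) - z)
  simp only [Complex.sub_im, Complex.ofReal_im, zero_sub, abs_neg] at h
  exact (le_abs_self _).trans h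

lemma pz_ne (z : ℂ) (hz : 0 < z.im) (x : ℝ) : (x:ℂ) - z ≠ 0 := by
  intro h
  have := pz_im_le z x
  rw [h, norm_zero] at this
  linarith

lemma pz_integrable_of_bound {g : ℝ → ℂ} (hc : Continuous g) (C : ℝ)
    (h : ∀ x : ℝ, ‖g x‖ ≤ C * Real.exp (-x ^ 2)) : Integrable g := by
  apply Integrable.mono' (((integrable_exp_neg_mul_sq one_pos).const_mul C))
    hc.aestronglyMeasurable
  filter_upwards with x
  simpa using h x

lemma pz_norm_exp (x : ℝ) : ‖Complex.exp (-(x:ℂ) ^ 2)‖ = Real.exp (-x ^ 2) := by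
  rw [Complex.norm_exp]
  simp [Complex.neg_re]
  norm_cast


lemma pz_cont1 (z : ℂ) (hz : 0 < z.im) :
    Continuous fun x : ℝ => Complex.exp (-(x:ℂ) ^ 2) / ((x:ℂ) - z) := by
  exact (Complex.continuous_exp.comp (by continuity)).div (by continuity)
    (fun x => pz_ne z hz x)

lemma pz_int1 (z : ℂ) (hz : 0 < z.im) :
    Integrable fun x : ℝ => Complex.exp (-(x:ℂ) ^ 2) / ((x:ℂ) - z) := by
  apply pz_integrable_of_bound (pz_cont1 z hz) (z.im)⁻¹
  intro x
  rw [norm_div, pz_norm_exp, div_eq_mul_inv, mul_comm]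
  gcongr
  exact pz_im_le z x

lemma pz_cont2 (z : ℂ) (hz : 0 < z.im) :
    Continuous fun x : ℝ => Complex.exp (-(x:ℂ) ^ 2) / ((x:ℂ) - z) ^ 2 := by
  exact (Complex.continuous_exp.comp (by continuity)).div (by continuity)
    (fun x => pow_ne_zero _ (pz_ne z hz x))

lemma pz_int2 (z : ℂ) (hz : 0 < z.im) :
    Integrable fun x : ℝ => Complex.exp (-(x:ℂ) ^ 2) / ((x:ℂ) - z) ^ 2 := by
  apply pz_integrable_of_bound (pz_cont2 z hz) ((z.im)^2)⁻¹
  intro x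
  rw [norm_div, pz_norm_exp, div_eq_mul_inv, mul_comm, norm_pow]
  gcongr
  exact pz_im_le z x

lemma pz_int_exp : Integrable fun x : ℝ => Complex.exp (-(x:ℂ) ^ 2) := by
  apply pz_integrable_of_bound (Complex.continuous_exp.comp (by continuity)) 1
  intro x
  simp only [Function.comp_apply]
  rw [pz_norm_exp, one_mul]

lemma pz_integral_exp : (∫ x : ℝ, Complex.exp (-(x:ℂ) ^ 2)) = (Real.sqrt Real.pi : ℂ) := by
  have h1 : ∀ x : ℝ, Complex.exp (-(x:ℂ) ^ 2) = ((Real.exp (-x ^ 2) : ℝ) : ℂ) := by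
    intro x
    rw [Complex.ofReal_exp]
    push_cast
    ring_nf
  simp_rw [h1]
  rw [show (∫ x : ℝ, ((Real.exp (-x ^ 2) : ℝ) : ℂ)) = ((∫ x : ℝ, Real.exp (-x ^ 2) : ℝ) : ℂ) from integral_ofReal]
  norm_cast
  have := integral_gaussian 1
  simp only [neg_mul, one_mul, div_one] at this
  rw [← this]

open Filter in
lemma pz_tendsto_exp_top : Tendsto (fun x : ℝ => Real.exp (-x ^ 2)) atTop (nhds 0) := by
  apply Real.tendsto_exp_atBot.comp
  have h2 : Tendsto (fun x : ℝ => x ^ 2) atTop atTop := tendsto_pow_atTop two_ne_zero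
  have := tendsto_neg_atTop_atBot.comp h2
  simpa [Function.comp_def] using this

open Filter in
lemma pz_tendsto_exp_bot : Tendsto (fun x : ℝ => Real.exp (-x ^ 2)) atBot (nhds 0) := by
  have := pz_tendsto_exp_top.comp tendsto_neg_atBot_atTop
  simpa [Function.comp_def] using this

open Filter in
lemma pz_F_deriv (z : ℂ) (hz : 0 < z.im) (x : ℝ) :
    HasDerivAt (fun x : ℝ => -(Complex.exp (-(x:ℂ) ^ 2) / ((x:ℂ) - z)))
      (2 * Complex.exp (-(x:ℂ) ^ 2) + 2 * z * (Complex.exp (-(x:ℂ) ^ 2) / ((x:ℂ) - z))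
        + Complex.exp (-(x:ℂ) ^ 2) / ((x:ℂ) - z) ^ 2) x := by
  have hid : HasDerivAt (fun x : ℝ => ((x:ℂ))) 1 x := by
    simpa using (hasDerivAt_id x).ofReal_comp
  have he : HasDerivAt (fun x : ℝ => Complex.exp (-(x:ℂ) ^ 2))
      (Complex.exp (-(x:ℂ) ^ 2) * (-(2 * (x:ℂ)))) x := by
    have h0 : HasDerivAt (fun x : ℝ => (((-x ^ 2 : ℝ)) : ℂ)) ((- (2 * x ^ 1) : ℝ) : ℂ) x :=
      HasDerivAt.ofReal_comp ((hasDerivAt_pow 2 x).neg)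
    have := h0.cexp
    have heq : (fun x : ℝ => Complex.exp (((-x ^ 2 : ℝ) : ℂ))) =
        fun x : ℝ => Complex.exp (-(x:ℂ) ^ 2) := by
      funext y; push_cast; ring_nf
    rw [heq] at this
    convert this using 1
    push_cast
    ring_nf
  have hden : HasDerivAt (fun x : ℝ => ((x:ℂ) - z)) 1 x := by
    simpa using hid.sub_const z
  have hne := pz_ne z hz x
  have := (he.div hden hne).neg
  convert this using 1
  · rfl
  · rfl
  field_simp
  ring

open Filter in
lemma pz_F_tendsto_top (z : ℂ) (hz : 0 < z.im) :
    Tendsto (fun x : ℝ => -(Complex.exp (-(x:ℂ) ^ 2) / ((x:ℂ) - z))) atTop (nhds 0) := by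
  apply squeeze_zero_norm (a := fun x : ℝ => (z.im)⁻¹ * Real.exp (-x ^ 2))
  · intro x
    rw [norm_neg, norm_div, pz_norm_exp, div_eq_mul_inv, mul_comm]
    gcongr
    exact pz_im_le z x
  · simpa using pz_tendsto_exp_top.const_mul (z.im)⁻¹

open Filter in
lemma pz_F_tendsto_bot (z : ℂ) (hz : 0 < z.im) :
    Tendsto (fun x : ℝ => -(Complex.exp (-(x:ℂ) ^ 2) / ((x:ℂ) - z))) atBot (nhds 0) := by
  apply squeeze_zero_norm (a := fun x : ℝ => (z.im)⁻¹ * Real.exp (-x ^ 2))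
  · intro x
    rw [norm_neg, norm_div, pz_norm_exp, div_eq_mul_inv, mul_comm]
    gcongr
    exact pz_im_le z x
  · simpa using pz_tendsto_exp_bot.const_mul (z.im)⁻¹

lemma pz_int_G (z : ℂ) (hz : 0 < z.im) :
    Integrable (fun x : ℝ => 2 * Complex.exp (-(x:ℂ) ^ 2)
      + 2 * z * (Complex.exp (-(x:ℂ) ^ 2) / ((x:ℂ) - z))
      + Complex.exp (-(x:ℂ) ^ 2) / ((x:ℂ) - z) ^ 2) :=
  ((pz_int_exp.const_mul 2).add ((pz_int1 z hz).const_mul (2 * z))).add (pz_int2 z hz)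

lemma pz_integral_G (z : ℂ) (hz : 0 < z.im) :
    (∫ x : ℝ, (2 * Complex.exp (-(x:ℂ) ^ 2)
      + 2 * z * (Complex.exp (-(x:ℂ) ^ 2) / ((x:ℂ) - z))
      + Complex.exp (-(x:ℂ) ^ 2) / ((x:ℂ) - z) ^ 2)) = 0 := by
  set G : ℝ → ℂ := fun x => 2 * Complex.exp (-(x:ℂ) ^ 2)
      + 2 * z * (Complex.exp (-(x:ℂ) ^ 2) / ((x:ℂ) - z))
      + Complex.exp (-(x:ℂ) ^ 2) / ((x:ℂ) - z) ^ 2 with hG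
  set F : ℝ → ℂ := fun x => -(Complex.exp (-(x:ℂ) ^ 2) / ((x:ℂ) - z)) with hF
  have hint := pz_int_G z hz
  have h1 : (∫ x in Set.Iic (0:ℝ), G x) = F 0 - 0 :=
    integral_Iic_of_hasDerivAt_of_tendsto' (fun x _ => pz_F_deriv z hz x)
      hint.integrableOn (pz_F_tendsto_bot z hz)
  have h2 : (∫ x in Set.Ioi (0:ℝ), G x) = 0 - F 0 :=
    integral_Ioi_of_hasDerivAt_of_tendsto' (fun x _ => pz_F_deriv z hz x)
      hint.integrableOn (pz_F_tendsto_top z hz)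
  have := intervalIntegral.integral_Iic_add_Ioi (b := (0:ℝ)) hint.integrableOn hint.integrableOn
  rw [← this, h1, h2]
  ring

lemma pz_key (z : ℂ) (hz : 0 < z.im) :
    (∫ x : ℝ, Complex.exp (-(x:ℂ) ^ 2) / ((x:ℂ) - z) ^ 2)
      = -2 * (Real.sqrt Real.pi : ℂ)
        - 2 * z * ∫ x : ℝ, Complex.exp (-(x:ℂ) ^ 2) / ((x:ℂ) - z) := by
  have h := pz_integral_G z hz
  have hA := pz_int_exp.const_mul (2 : ℂ)
  have hB := (pz_int1 z hz).const_mul (2 * z)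
  have e1 : (∫ x : ℝ, ((2 * Complex.exp (-(x:ℂ) ^ 2)
        + 2 * z * (Complex.exp (-(x:ℂ) ^ 2) / ((x:ℂ) - z)))
        + Complex.exp (-(x:ℂ) ^ 2) / ((x:ℂ) - z) ^ 2))
      = (∫ x : ℝ, (2 * Complex.exp (-(x:ℂ) ^ 2)
        + 2 * z * (Complex.exp (-(x:ℂ) ^ 2) / ((x:ℂ) - z))))
        + ∫ x : ℝ, Complex.exp (-(x:ℂ) ^ 2) / ((x:ℂ) - z) ^ 2 :=
    integral_add (hA.add hB) (pz_int2 z hz)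
  have e2 : (∫ x : ℝ, (2 * Complex.exp (-(x:ℂ) ^ 2)
        + 2 * z * (Complex.exp (-(x:ℂ) ^ 2) / ((x:ℂ) - z))))
      = (∫ x : ℝ, 2 * Complex.exp (-(x:ℂ) ^ 2))
        + ∫ x : ℝ, 2 * z * (Complex.exp (-(x:ℂ) ^ 2) / ((x:ℂ) - z)) :=
    integral_add hA hB
  rw [e1, e2, integral_const_mul, integral_const_mul, pz_integral_exp] at h
  linear_combination h

lemma pz_bound_int (C : ℝ) : Integrable fun x : ℝ => C * Real.exp (-x ^ 2) := by
  have := (integrable_exp_neg_mul_sq one_pos).const_mul C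
  simpa using this

open Metric Filter in
lemma pz_ball_im (ζ : ℂ) (hζ : 0 < ζ.im) (z : ℂ) (hz : z ∈ ball ζ (ζ.im / 2)) :
    ζ.im / 2 ≤ z.im := by
  rw [mem_ball, Complex.dist_eq] at hz
  have h1 : |(z - ζ).im| ≤ ‖z - ζ‖ := Complex.abs_im_le_norm _
  have h2 : (z - ζ).im = z.im - ζ.im := by simp [Complex.sub_im]
  rw [h2] at h1
  have := abs_le.mp (h1.trans hz.le)
  linarith [this.1]

/-- The plasma dispersion function `Z(ζ) = π^{−1/2} ∫_ℝ e^{−x²}/(x − ζ) dx`. -/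
noncomputable def plasmaZ (ζ : ℂ) : ℂ :=
  (Real.sqrt Real.pi : ℂ)⁻¹ * ∫ x : ℝ, Complex.exp (-(x : ℂ) ^ 2) / ((x : ℂ) - ζ)

open Metric Filter in
/-- The plasma dispersion function is complex differentiable on the open upper half
plane and satisfies `Z′(ζ) = −2(1 + ζ Z(ζ))` there. -/
theorem plasmaZ_hasDerivAt (ζ : ℂ) (hζ : 0 < ζ.im) :
    HasDerivAt plasmaZ (-2 * (1 + ζ * plasmaZ ζ)) ζ := by
  have ε_pos : (0:ℝ) < ζ.im / 2 := by linarith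
  have him : ∀ z ∈ ball ζ (ζ.im / 2), 0 < z.im := fun z hz =>
    lt_of_lt_of_le ε_pos (pz_ball_im ζ hζ z hz)
  have key := hasDerivAt_integral_of_dominated_loc_of_deriv_le
    (F := fun (z : ℂ) (x : ℝ) => Complex.exp (-(x:ℂ) ^ 2) / ((x:ℂ) - z))
    (F' := fun (z : ℂ) (x : ℝ) => Complex.exp (-(x:ℂ) ^ 2) / ((x:ℂ) - z) ^ 2)
    (x₀ := ζ) (bound := fun x : ℝ => ((ζ.im / 2) ^ 2)⁻¹ * Real.exp (-x ^ 2))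
    (Metric.ball_mem_nhds ζ ε_pos)
    (Filter.eventually_of_mem (Metric.ball_mem_nhds ζ ε_pos)
      (fun z hz => (pz_cont1 z (him z hz)).aestronglyMeasurable))
    (pz_int1 ζ hζ)
    ((pz_cont2 ζ hζ).aestronglyMeasurable)
    (by
      filter_upwards with x
      intro z hz
      rw [norm_div, pz_norm_exp, norm_pow, div_eq_mul_inv, mul_comm]
      gcongr
      exact (pz_ball_im ζ hζ z hz).trans (pz_im_le z x))
    (pz_bound_int _)
    (by
      filter_upwards with x
      intro z hz
      have hne := pz_ne z (him z hz) x
      have hden : HasDerivAt (fun z : ℂ => ((x:ℂ) - z)) (-1) z := by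
        simpa using (hasDerivAt_id z).const_sub ((x:ℂ))
      have := (hasDerivAt_const z (Complex.exp (-(x:ℂ) ^ 2))).div hden hne
      convert this using 1
      · rfl
      · rfl
      field_simp
      ring)
  have hD := key.2
  have hZ := hD.const_mul ((Real.sqrt Real.pi : ℂ)⁻¹)
  have hfun : (fun z : ℂ => (Real.sqrt Real.pi : ℂ)⁻¹
      * ∫ x : ℝ, Complex.exp (-(x:ℂ) ^ 2) / ((x:ℂ) - z)) = plasmaZ := rfl
  rw [hfun] at hZ
  convert hZ using 1
  · rfl
  · rfl
  have hπ : (Real.sqrt Real.pi : ℂ) ≠ 0 := by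
    exact_mod_cast (Real.sqrt_pos.mpr Real.pi_pos).ne'
  rw [pz_key ζ hζ]
  unfold plasmaZ
  field_simp
  ring
end

section
/- The plasma dispersion function is expressed through the error function: for every complex ζ with Im ζ > 0, Z(ζ) = i √π e^{−ζ²} (1 + erf(iζ)), where erf(iζ) is given by the path integral erf(iζ) = (2iζ/√π) ∫₀¹ e^{ζ² s²} ds. Equivalently, π^{−1/2} ∫_ℝ e^{−x²}/(x − ζ) dx = i √π e^{−ζ²} ( 1 + (2iζ/√π) ∫₀¹ e^{ζ² s²} ds ). -/
open MeasureTheory Complex Set Filter intervalIntegral Real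

lemma integral_cexp_Ioi_of_pos_re {c : ℂ} (hc : 0 < c.re) :
    ∫ t in Ioi (0:ℝ), Complex.exp (-(c * t)) = 1 / c := by
  have hc0 : c ≠ 0 := fun h => by simp [h] at hc
  have hderiv : ∀ t ∈ Ici (0:ℝ),
      HasDerivAt (fun t : ℝ => -c⁻¹ * Complex.exp (-(c * t))) (Complex.exp (-(c * t))) t := by
    intro t _
    have h1 : HasDerivAt (fun t : ℝ => (t:ℂ)) 1 t := Complex.ofRealCLM.hasDerivAt
    have h2 : HasDerivAt (fun t : ℝ => -(c * t)) (-c) t := by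
      have h := (h1.const_mul c).neg; simp only [mul_one] at h; exact h
    have h3 := (h2.cexp).const_mul (-c⁻¹)
    convert h3 using 1
    rfl
    linear_combination (-Complex.exp (-(c * t))) * inv_mul_cancel₀ hc0
  have hint : IntegrableOn (fun t : ℝ => Complex.exp (-(c * t))) (Ioi 0) := by
    apply Integrable.mono' ((exp_neg_integrableOn_Ioi 0 hc))
    · exact (Complex.continuous_exp.comp (by continuity)).aestronglyMeasurable
    · filter_upwards with t
      simp [Complex.norm_exp]
  have htend : Tendsto (fun t : ℝ => -c⁻¹ * Complex.exp (-(c * t))) atTop (nhds 0) := by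
    rw [tendsto_zero_iff_norm_tendsto_zero]
    have : (fun t : ℝ => ‖-c⁻¹ * Complex.exp (-(c * t))‖)
        = fun t : ℝ => ‖c⁻¹‖ * Real.exp (-(c.re * t)) := by
      funext t; simp [Complex.norm_exp]
    rw [this]
    rw [show (0:ℝ) = ‖c⁻¹‖ * 0 by ring]
    apply Tendsto.const_mul
    exact Real.tendsto_exp_atBot.comp
      (tendsto_neg_atTop_atBot.comp (tendsto_id.const_mul_atTop hc))
  have := integral_Ioi_of_hasDerivAt_of_tendsto' hderiv hint htend
  rw [this]
  simp [one_div]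

lemma norm_cexp_sq_bound (ζ : ℂ) (hζ : 0 < ζ.im) {r u : ℝ} (hr : 0 ≤ r) (hu : 0 ≤ u) :
    ‖Complex.exp (-((u:ℂ) - Complex.I*((r:ℂ)*ζ))^2)‖
      ≤ Real.exp (r^2*ζ.re^2) * Real.exp (-u^2) := by
  rw [Complex.norm_exp, ← Real.exp_add]
  apply Real.exp_le_exp.mpr
  have : (-(((u:ℂ) - Complex.I*((r:ℂ)*ζ))^2)).re
      = -(u^2) - 2*u*r*ζ.im + r^2*(ζ.re^2 - ζ.im^2) := by
    simp [pow_two, Complex.mul_re, Complex.mul_im, Complex.sub_re, Complex.sub_im]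
    ring
  rw [this]
  nlinarith [mul_nonneg (mul_nonneg (mul_nonneg (by norm_num : (0:ℝ) ≤ 2) hu) hr) hζ.le,
    sq_nonneg (r*ζ.im)]

lemma norm_lin_bound (ζ : ℂ) {r u : ℝ} (hr : 0 ≤ r) (hu : 0 ≤ u) :
    ‖2*Complex.I*ζ*((u:ℂ) - Complex.I*((r:ℂ)*ζ))‖ ≤ 2*‖ζ‖*(u + r*‖ζ‖) := by
  have hsub : ‖(u:ℂ) - Complex.I*((r:ℂ)*ζ)‖ ≤ u + r*‖ζ‖ := by
    calc ‖(u:ℂ) - Complex.I*((r:ℂ)*ζ)‖ ≤ ‖(u:ℂ)‖ + ‖Complex.I*((r:ℂ)*ζ)‖ := norm_sub_le _ _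
      _ = |u| + r*‖ζ‖ := by
          simp [map_mul, _root_.abs_of_nonneg hr]
      _ = u + r*‖ζ‖ := by rw [_root_.abs_of_nonneg hu]
  have h2 : ‖2*Complex.I*ζ‖ = 2*‖ζ‖ := by simp [map_mul]
  rw [norm_mul, h2]
  exact mul_le_mul_of_nonneg_left hsub (by positivity)

lemma integrable_deriv_halfline (ζ : ℂ) (hζ : 0 < ζ.im) {r : ℝ} (hr : 0 ≤ r) :
    IntegrableOn (fun u : ℝ => 2*Complex.I*ζ*((u:ℂ) - Complex.I*((r:ℂ)*ζ))
      * Complex.exp (-((u:ℂ) - Complex.I*((r:ℂ)*ζ))^2)) (Ioi 0) := by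
  have habs := norm_nonneg ζ
  apply Integrable.mono' (g := fun u : ℝ =>
      (2*‖ζ‖*Real.exp (r^2*ζ.re^2)) * ((u + r*‖ζ‖) * Real.exp (-u^2)))
  · apply Integrable.const_mul
    have h1 : Integrable (fun u : ℝ => u * Real.exp (-u^2)) := by
      simpa using integrable_mul_exp_neg_mul_sq (one_pos)
    have h2 : Integrable (fun u : ℝ => (r*‖ζ‖) * Real.exp (-u^2)) := by
      apply Integrable.const_mul
      simpa using integrable_exp_neg_mul_sq (one_pos)
    exact ((h1.add h2).congr (by filter_upwards with u; simp only [Pi.add_apply]; ring)).integrableOn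
  · exact ((by continuity : Continuous (fun u : ℝ => 2*Complex.I*ζ*((u:ℂ) - Complex.I*((r:ℂ)*ζ))
      * Complex.exp (-((u:ℂ) - Complex.I*((r:ℂ)*ζ))^2)))).aestronglyMeasurable
  · filter_upwards [ae_restrict_mem measurableSet_Ioi] with u hu
    have hu' : (0:ℝ) ≤ u := le_of_lt hu
    rw [norm_mul]
    calc ‖2*Complex.I*ζ*((u:ℂ) - Complex.I*((r:ℂ)*ζ))‖ * ‖Complex.exp (-((u:ℂ) - Complex.I*((r:ℂ)*ζ))^2)‖
        ≤ (2*‖ζ‖*(u + r*‖ζ‖)) * (Real.exp (r^2*ζ.re^2) * Real.exp (-u^2)) := by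
          apply mul_le_mul (norm_lin_bound ζ hr hu') (norm_cexp_sq_bound ζ hζ hr hu')
            (norm_nonneg _) (by positivity)
      _ = (2*‖ζ‖*Real.exp (r^2*ζ.re^2)) * ((u + r*‖ζ‖) * Real.exp (-u^2)) := by ring

lemma hasDerivAt_aux (ζ : ℂ) (r : ℝ) (u : ℝ) :
    HasDerivAt (fun u : ℝ => -(Complex.I*ζ) * Complex.exp (-((u:ℂ) - Complex.I*((r:ℂ)*ζ))^2))
      (2*Complex.I*ζ*((u:ℂ) - Complex.I*((r:ℂ)*ζ))
        * Complex.exp (-((u:ℂ) - Complex.I*((r:ℂ)*ζ))^2)) u := by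
  have h1 : HasDerivAt (fun u : ℝ => (u:ℂ)) 1 u := Complex.ofRealCLM.hasDerivAt
  have h2 : HasDerivAt (fun u : ℝ => ((u:ℂ) - Complex.I*((r:ℂ)*ζ))) 1 u := h1.sub_const _
  have h3 := (((h2.mul h2)).neg).cexp.const_mul (-(Complex.I*ζ))
  simp only [Pi.mul_apply, Pi.neg_apply] at h3
  simp only [pow_two]
  convert h3 using 1
  rfl
  ring

lemma halfline_inner (ζ : ℂ) (hζ : 0 < ζ.im) {r : ℝ} (hr : 0 ≤ r) :
    ∫ u in Ioi (0:ℝ), 2*Complex.I*ζ*((u:ℂ) - Complex.I*((r:ℂ)*ζ))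
      * Complex.exp (-((u:ℂ) - Complex.I*((r:ℂ)*ζ))^2)
    = Complex.I*ζ*Complex.exp (ζ^2*(r:ℂ)^2) := by
  have htend : Tendsto (fun u : ℝ => -(Complex.I*ζ) * Complex.exp (-((u:ℂ) - Complex.I*((r:ℂ)*ζ))^2))
      atTop (nhds 0) := by
    rw [tendsto_zero_iff_norm_tendsto_zero]
    apply squeeze_zero' (Eventually.of_forall (fun t => norm_nonneg _))
      (g := fun u => (‖ζ‖ * Real.exp (r^2*ζ.re^2)) * Real.exp (-u^2))
    · filter_upwards [eventually_ge_atTop (0:ℝ)] with u hu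
      rw [norm_mul]
      have : ‖-(Complex.I*ζ)‖ = ‖ζ‖ := by simp [map_mul]
      rw [this, mul_assoc]
      exact mul_le_mul_of_nonneg_left (norm_cexp_sq_bound ζ hζ hr hu) (norm_nonneg ζ)
    · rw [show (0:ℝ) = (‖ζ‖ * Real.exp (r^2*ζ.re^2)) * 0 by ring]
      apply Tendsto.const_mul
      have : Tendsto (fun u : ℝ => -u^2) atTop atBot := by
        apply tendsto_neg_atTop_atBot.comp
        exact tendsto_pow_atTop (by norm_num)
      exact Real.tendsto_exp_atBot.comp this
  have h0 := integral_Ioi_of_hasDerivAt_of_tendsto' (f' := fun u : ℝ =>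
      2*Complex.I*ζ*((u:ℂ) - Complex.I*((r:ℂ)*ζ)) * Complex.exp (-((u:ℂ) - Complex.I*((r:ℂ)*ζ))^2))
    (fun u _ => hasDerivAt_aux ζ r u) (integrable_deriv_halfline ζ hζ hr) htend
  rw [h0, Complex.ofReal_zero]
  have he : (-((0:ℂ) - Complex.I*((r:ℂ)*ζ))^2) = ζ^2*(r:ℂ)^2 := by
    linear_combination (-(r:ℂ)^2*ζ^2) * Complex.I_sq
  rw [he]
  ring

lemma cpow_half_pi : ((Real.pi:ℂ))^(1/2:ℂ) = (Real.sqrt Real.pi : ℂ) := by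
  rw [Real.sqrt_eq_rpow, Complex.ofReal_cpow Real.pi_pos.le]
  norm_num

lemma hasDerivAt_r (ζ : ℂ) (u r : ℝ) :
    HasDerivAt (fun r : ℝ => Complex.exp (-((u:ℂ) - Complex.I*((r:ℂ)*ζ))^2))
      (2*Complex.I*ζ*((u:ℂ) - Complex.I*((r:ℂ)*ζ))
        * Complex.exp (-((u:ℂ) - Complex.I*((r:ℂ)*ζ))^2)) r := by
  have h1 : HasDerivAt (fun r : ℝ => (r:ℂ)) 1 r := Complex.ofRealCLM.hasDerivAt
  have h2 : HasDerivAt (fun r : ℝ => ((u:ℂ) - Complex.I*((r:ℂ)*ζ))) (-(Complex.I*ζ)) r := by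
    simpa using ((h1.mul_const ζ).const_mul Complex.I).const_sub (u:ℂ)
  have h3 := ((h2.mul h2).neg).cexp
  simp only [Pi.mul_apply, Pi.neg_apply] at h3
  simp only [pow_two]
  convert h3 using 1
  ring

lemma integrable_prod_D (ζ : ℂ) (hζ : 0 < ζ.im) :
    Integrable (Function.uncurry (fun (u r : ℝ) => 2*Complex.I*ζ*((u:ℂ) - Complex.I*((r:ℂ)*ζ))
      * Complex.exp (-((u:ℂ) - Complex.I*((r:ℂ)*ζ))^2)))
      ((volume.restrict (Ioi (0:ℝ))).prod (volume.restrict (Ioc (0:ℝ) 1))) := by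
  have habs := norm_nonneg ζ
  have hA : Integrable (fun u : ℝ => (2*‖ζ‖*Real.exp (ζ.re^2))
      * ((u + ‖ζ‖) * Real.exp (-u^2))) (volume.restrict (Ioi (0:ℝ))) := by
    apply Integrable.const_mul
    have h1 : Integrable (fun u : ℝ => u * Real.exp (-u^2)) := by
      simpa using integrable_mul_exp_neg_mul_sq (one_pos)
    have h2 : Integrable (fun u : ℝ => (‖ζ‖) * Real.exp (-u^2)) := by
      apply Integrable.const_mul
      simpa using integrable_exp_neg_mul_sq (one_pos)
    exact ((h1.add h2).congr (by filter_upwards with u; simp only [Pi.add_apply]; ring)).integrableOn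
  apply Integrable.mono' (g := fun z : ℝ × ℝ =>
      ((2*‖ζ‖*Real.exp (ζ.re^2)) * ((z.1 + ‖ζ‖) * Real.exp (-z.1^2))) * 1)
  · exact hA.mul_prod (integrable_const 1)
  · apply Continuous.aestronglyMeasurable
    have : Continuous (Function.uncurry (fun (u r : ℝ) => 2*Complex.I*ζ*((u:ℂ) - Complex.I*((r:ℂ)*ζ))
      * Complex.exp (-((u:ℂ) - Complex.I*((r:ℂ)*ζ))^2))) := by fun_prop
    exact this
  · rw [Measure.prod_restrict]
    filter_upwards [ae_restrict_mem (measurableSet_Ioi.prod measurableSet_Ioc)] with z hz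
    obtain ⟨hu, hr⟩ := hz
    have hu' : (0:ℝ) ≤ z.1 := le_of_lt hu
    have hr' : (0:ℝ) ≤ z.2 := le_of_lt hr.1
    have hr1 : z.2 ≤ 1 := hr.2
    rw [Function.uncurry, norm_mul, mul_one]
    calc ‖2*Complex.I*ζ*((z.1:ℂ) - Complex.I*((z.2:ℂ)*ζ))‖ * ‖Complex.exp (-((z.1:ℂ) - Complex.I*((z.2:ℂ)*ζ))^2)‖
        ≤ (2*‖ζ‖*(z.1 + z.2*‖ζ‖)) * (Real.exp (z.2^2*ζ.re^2) * Real.exp (-z.1^2)) :=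
          mul_le_mul (norm_lin_bound ζ hr' hu') (norm_cexp_sq_bound ζ hζ hr' hu')
            (norm_nonneg _) (by positivity)
      _ ≤ (2*‖ζ‖*(z.1 + 1*‖ζ‖)) * (Real.exp (1*ζ.re^2) * Real.exp (-z.1^2)) := by
          apply mul_le_mul
          · apply mul_le_mul_of_nonneg_left _ (by positivity)
            nlinarith
          · apply mul_le_mul_of_nonneg_right _ (Real.exp_nonneg _)
            apply Real.exp_le_exp.mpr
            have hsq : z.2^2 ≤ 1 := by nlinarith
            nlinarith [sq_nonneg ζ.re, hsq]
          · positivity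
          · positivity
      _ = (2*‖ζ‖*Real.exp (ζ.re^2)) * ((z.1 + ‖ζ‖) * Real.exp (-z.1^2)) := by
          ring_nf

lemma halfline (ζ : ℂ) (hζ : 0 < ζ.im) :
    ∫ u in Ioi (0:ℝ), Complex.exp (-((u:ℂ) - Complex.I*ζ)^2)
    = (Real.sqrt Real.pi : ℂ)/2 + Complex.I*ζ * ∫ s in (0:ℝ)..1, Complex.exp (ζ^2*(s:ℂ)^2) := by
  set D : ℝ → ℝ → ℂ := fun u r => 2*Complex.I*ζ*((u:ℂ) - Complex.I*((r:ℂ)*ζ))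
      * Complex.exp (-((u:ℂ) - Complex.I*((r:ℂ)*ζ))^2) with hD
  have key : ∀ u : ℝ, Complex.exp (-((u:ℂ) - Complex.I*ζ)^2)
      = Complex.exp (-(u:ℂ)^2) + ∫ r in Ioc (0:ℝ) 1, D u r := by
    intro u
    have hftc := intervalIntegral.integral_eq_sub_of_hasDerivAt
      (f := fun r : ℝ => Complex.exp (-((u:ℂ) - Complex.I*((r:ℂ)*ζ))^2))
      (f' := fun r => D u r) (a := 0) (b := 1)
      (fun r _ => hasDerivAt_r ζ u r)
      (Continuous.intervalIntegrable (by fun_prop) 0 1)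
    rw [intervalIntegral.integral_of_le zero_le_one] at hftc
    rw [hftc]
    push_cast
    ring_nf
  calc ∫ u in Ioi (0:ℝ), Complex.exp (-((u:ℂ) - Complex.I*ζ)^2)
      = ∫ u in Ioi (0:ℝ), (Complex.exp (-(u:ℂ)^2) + ∫ r in Ioc (0:ℝ) 1, D u r) := by
        exact setIntegral_congr_fun measurableSet_Ioi (fun u _ => key u)
    _ = (∫ u in Ioi (0:ℝ), Complex.exp (-(u:ℂ)^2))
          + ∫ u in Ioi (0:ℝ), ∫ r in Ioc (0:ℝ) 1, D u r := by
        apply MeasureTheory.integral_add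
        · exact ((integrable_cexp_quadratic (b := 1) (by norm_num) 0 0).congr
            (by filter_upwards with u; congr 1; push_cast; ring)).integrableOn
        · have := (integrable_prod_D ζ hζ).integral_prod_left
          simpa [Function.uncurry] using this
    _ = (Real.sqrt Real.pi : ℂ)/2 + Complex.I*ζ * ∫ s in (0:ℝ)..1, Complex.exp (ζ^2*(s:ℂ)^2) := by
        congr 1
        · have := integral_gaussian_complex_Ioi (b := 1) (by norm_num)
          rw [show ∫ u in Ioi (0:ℝ), Complex.exp (-(u:ℂ)^2)
              = ∫ u in Ioi (0:ℝ), Complex.exp (-1*(u:ℂ)^2) by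
            apply setIntegral_congr_fun measurableSet_Ioi (fun u _ => by norm_num), this]
          rw [show ((Real.pi:ℂ)/1) = (Real.pi:ℂ) by ring, cpow_half_pi]
        · rw [integral_integral_swap (integrable_prod_D ζ hζ)]
          rw [intervalIntegral.integral_of_le zero_le_one]
          rw [setIntegral_congr_fun measurableSet_Ioc
            (fun r hr => halfline_inner ζ hζ (le_of_lt hr.1))]
          rw [MeasureTheory.integral_const_mul]

lemma integrable_prod_F (ζ : ℂ) (hζ : 0 < ζ.im) :
    Integrable (Function.uncurry (fun (x t : ℝ) =>
        Complex.exp ((-1:ℂ)*(x:ℂ)^2 + (-(Complex.I*(t:ℂ)))*(x:ℂ) + Complex.I*(t:ℂ)*ζ)))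
      (volume.prod (volume.restrict (Ioi (0:ℝ)))) := by
  have h1 : Integrable (fun x : ℝ => Real.exp (-x^2)) := by
    simpa using integrable_exp_neg_mul_sq (one_pos)
  have h2 : IntegrableOn (fun t : ℝ => Real.exp (-ζ.im * t)) (Ioi (0:ℝ)) :=
    exp_neg_integrableOn_Ioi 0 hζ
  apply Integrable.mono' (g := fun z : ℝ × ℝ => Real.exp (-z.1^2) * Real.exp (-ζ.im * z.2))
  · exact h1.mul_prod h2
  · apply Continuous.aestronglyMeasurable
    have : Continuous (Function.uncurry (fun (x t : ℝ) =>
        Complex.exp ((-1:ℂ)*(x:ℂ)^2 + (-(Complex.I*(t:ℂ)))*(x:ℂ) + Complex.I*(t:ℂ)*ζ))) := by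
      fun_prop
    exact this
  · filter_upwards with z
    rw [Function.uncurry, Complex.norm_exp, ← Real.exp_add]
    apply le_of_eq
    congr 1
    simp [Complex.add_re, Complex.mul_re, Complex.mul_im, Complex.I_re, Complex.I_im,
      Complex.ofReal_re, Complex.ofReal_im, pow_two]
    ring

lemma inner_eval (ζ : ℂ) (t : ℝ) :
    ∫ x : ℝ, Complex.exp ((-1:ℂ)*(x:ℂ)^2 + (-(Complex.I*(t:ℂ)))*(x:ℂ) + Complex.I*(t:ℂ)*ζ)
      = (Real.sqrt Real.pi : ℂ) * Complex.exp (Complex.I*(t:ℂ)*ζ - (t:ℂ)^2/4) := by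
  rw [integral_cexp_quadratic (by norm_num : ((-1:ℂ)).re < 0)]
  congr 1
  · rw [show ((Real.pi:ℂ)/ -(-1)) = (Real.pi:ℂ) by norm_num, cpow_half_pi]
  · congr 1
    linear_combination ((t:ℂ)^2/4) * Complex.I_sq

/-- The plasma dispersion function expressed through the error function: for `Im ζ > 0`,
`π^{−1/2} ∫_ℝ e^{−x²}/(x − ζ) dx = i √π e^{−ζ²} (1 + (2iζ/√π) ∫₀¹ e^{ζ²s²} ds)`. -/
theorem plasmaZ_eq_erf (ζ : ℂ) (hζ : 0 < ζ.im) :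
    (Real.sqrt Real.pi : ℂ)⁻¹ * (∫ x : ℝ, Complex.exp (-(x : ℂ) ^ 2) / ((x : ℂ) - ζ)) =
      Complex.I * (Real.sqrt Real.pi : ℂ) * Complex.exp (-ζ ^ 2) *
        (1 + 2 * Complex.I * ζ / (Real.sqrt Real.pi : ℂ) *
          ∫ s in (0:ℝ)..1, Complex.exp (ζ ^ 2 * (s : ℂ) ^ 2)) := by
  have hne : ∀ x : ℝ, ((x:ℂ) - ζ) ≠ 0 := by
    intro x h
    have : ((x:ℂ) - ζ).im = 0 := by rw [h]; rfl
    simp [Complex.sub_im] at this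
    rw [this] at hζ; exact lt_irrefl 0 hζ
  have hcre : ∀ x : ℝ, 0 < (Complex.I * ((x:ℂ) - ζ)).re := by
    intro x
    simp [Complex.mul_re, Complex.sub_im]
    exact hζ
  have key1 : ∀ x : ℝ, Complex.exp (-(x : ℂ) ^ 2) / ((x : ℂ) - ζ)
      = Complex.I * ∫ t in Ioi (0:ℝ),
          Complex.exp ((-1:ℂ)*(x:ℂ)^2 + (-(Complex.I*(t:ℂ)))*(x:ℂ) + Complex.I*(t:ℂ)*ζ) := by
    intro x
    have h := integral_cexp_Ioi_of_pos_re (hcre x)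
    calc Complex.exp (-(x : ℂ) ^ 2) / ((x : ℂ) - ζ)
        = Complex.exp (-(x:ℂ)^2) * (Complex.I * (1/(Complex.I*((x:ℂ)-ζ)))) := by
          rw [div_eq_mul_inv]; congr 1
          rw [one_div, mul_inv, ← mul_assoc, mul_inv_cancel₀ Complex.I_ne_zero, one_mul]
      _ = Complex.I * (Complex.exp (-(x:ℂ)^2)
            * ∫ t in Ioi (0:ℝ), Complex.exp (-(Complex.I*((x:ℂ)-ζ) * (t:ℂ)))) := by
          rw [h]; ring
      _ = Complex.I * ∫ t in Ioi (0:ℝ),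
            Complex.exp (-(x:ℂ)^2) * Complex.exp (-(Complex.I*((x:ℂ)-ζ) * (t:ℂ))) := by
          rw [MeasureTheory.integral_const_mul]
      _ = Complex.I * ∫ t in Ioi (0:ℝ),
            Complex.exp ((-1:ℂ)*(x:ℂ)^2 + (-(Complex.I*(t:ℂ)))*(x:ℂ) + Complex.I*(t:ℂ)*ζ) := by
          congr 1
          apply setIntegral_congr_fun measurableSet_Ioi (fun t _ => ?_)
          rw [← Complex.exp_add]; congr 1; ring
  have step2 : (∫ x : ℝ, Complex.exp (-(x : ℂ) ^ 2) / ((x : ℂ) - ζ))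
      = Complex.I * ((Real.sqrt Real.pi : ℂ) *
          ∫ t in Ioi (0:ℝ), Complex.exp (Complex.I*(t:ℂ)*ζ - (t:ℂ)^2/4)) := by
    simp_rw [key1]
    rw [MeasureTheory.integral_const_mul, integral_integral_swap (integrable_prod_F ζ hζ)]
    congr 1
    rw [← MeasureTheory.integral_const_mul]
    exact setIntegral_congr_fun measurableSet_Ioi (fun t _ => inner_eval ζ t)
  have hsub : (∫ t in Ioi (0:ℝ), Complex.exp (Complex.I*(t:ℂ)*ζ - (t:ℂ)^2/4))
      = 2 * (Complex.exp (-ζ^2) * ∫ u in Ioi (0:ℝ), Complex.exp (-((u:ℂ) - Complex.I*ζ)^2)) := by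
    have h := integral_comp_mul_left_Ioi
      (g := fun t : ℝ => Complex.exp (Complex.I*(t:ℂ)*ζ - (t:ℂ)^2/4)) 0 (two_pos)
    rw [mul_zero] at h
    have h2 : (∫ u in Ioi (0:ℝ), Complex.exp (Complex.I*((2*u:ℝ):ℂ)*ζ - ((2*u:ℝ):ℂ)^2/4))
        = Complex.exp (-ζ^2) * ∫ u in Ioi (0:ℝ), Complex.exp (-((u:ℂ) - Complex.I*ζ)^2) := by
      rw [← MeasureTheory.integral_const_mul]
      apply setIntegral_congr_fun measurableSet_Ioi (fun u _ => ?_)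
      rw [← Complex.exp_add]
      congr 1
      push_cast
      linear_combination (ζ^2) * Complex.I_sq
    rw [h2, Complex.real_smul] at h
    push_cast at h
    linear_combination (-2) * h
  rw [step2, hsub, halfline ζ hζ]
  have hπ : (Real.sqrt Real.pi : ℂ) ≠ 0 := by
    simp [Complex.ofReal_ne_zero]
    positivity
  field_simp
end

section
/- The two-stream dispersion integral identity: let v_th > 0, u ∈ ℝ, and let f₀(v) = (1/2)(2π v_th²)^{−1/2} [ exp(−(v + u)²/(2 v_th²)) + exp(−(v − u)²/(2 v_th²)) ] be the two-beam equilibrium. Then for every complex w with Im w > 0, setting ζ₋ = (w − u)/(√2 v_th) and ζ₊ = (w + u)/(√2 v_th), the integral ∫_ℝ f₀′(v)/(v − w) dv equals −(1/(2 v_th²)) [ (1 + ζ₋ Z(ζ₋)) + (1 + ζ₊ Z(ζ₊)) ], i.e. equals (1/(4 v_th²)) [ Z′(ζ₋) + Z′(ζ₊) ] where Z′(ζ) = −2(1 + ζ Z(ζ)). -/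
open MeasureTheory

lemma denom_ne {ζ : ℂ} (hζ : ζ.im ≠ 0) (x : ℝ) : (x : ℂ) - ζ ≠ 0 := by
  intro h
  have := congrArg Complex.im h
  simp at this
  exact hζ this

lemma denom_norm {ζ : ℂ} (x : ℝ) : |ζ.im| ≤ ‖(x : ℂ) - ζ‖ := by
  have := Complex.abs_im_le_norm ((x : ℂ) - ζ)
  simpa using this

lemma integrable_div {ζ : ℂ} (hζ : ζ.im ≠ 0) (g : ℝ → ℝ) (hc : Continuous g)
    (hg : Integrable g) :
    Integrable (fun x : ℝ => ((g x : ℝ) : ℂ) / ((x : ℂ) - ζ)) := by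
  have him : (0 : ℝ) < |ζ.im| := abs_pos.mpr hζ
  refine (hg.norm.const_mul |ζ.im|⁻¹).mono' ?_ ?_
  · exact (Continuous.div (by continuity) (by continuity) (denom_ne hζ)).aestronglyMeasurable
  · filter_upwards with x
    rw [norm_div, Complex.norm_real]
    rw [div_le_iff₀ (lt_of_lt_of_le him (denom_norm x))]
    calc ‖g x‖ = |ζ.im|⁻¹ * ‖g x‖ * |ζ.im| := by field_simp
    _ ≤ |ζ.im|⁻¹ * ‖g x‖ * ‖(x:ℂ) - ζ‖ :=
        mul_le_mul_of_nonneg_left (denom_norm x) (by positivity)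

lemma key (ζ : ℂ) (hζ : ζ.im ≠ 0) :
    ∫ x : ℝ, (x : ℂ) * Complex.exp (-(x : ℂ) ^ 2) / ((x : ℂ) - ζ)
      = (Real.sqrt Real.pi : ℂ) * (1 + ζ * plasmaZ ζ) := by
  have hre : ∀ x : ℝ, Complex.exp (-(x : ℂ) ^ 2) = ((Real.exp (-x ^ 2) : ℝ) : ℂ) := by
    intro x; rw [Complex.ofReal_exp]; push_cast; ring_nf
  have hpt : ∀ x : ℝ, (x : ℂ) * Complex.exp (-(x : ℂ) ^ 2) / ((x : ℂ) - ζ)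
      = ((Real.exp (-x ^ 2) : ℝ) : ℂ) + ζ * (((Real.exp (-x ^ 2) : ℝ) : ℂ) / ((x : ℂ) - ζ)) := by
    intro x
    rw [hre x]
    field_simp [denom_ne hζ x]
    ring
  rw [integral_congr_ae (Filter.Eventually.of_forall hpt)]
  have hI1 : Integrable (fun x : ℝ => ((Real.exp (-x ^ 2) : ℝ) : ℂ)) := by
    have : Integrable (fun x : ℝ => Real.exp (-x ^ 2)) := by
      simpa using integrable_exp_neg_mul_sq (by norm_num : (0:ℝ) < 1)
    exact this.ofReal
  have hI2 : Integrable (fun x : ℝ => ((Real.exp (-x ^ 2) : ℝ) : ℂ) / ((x : ℂ) - ζ)) := by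
    refine integrable_div hζ _ (by continuity) ?_
    simpa using integrable_exp_neg_mul_sq (by norm_num : (0:ℝ) < 1)
  rw [integral_add hI1 (hI2.const_mul ζ), integral_const_mul]
  have h1 : ∫ x : ℝ, ((Real.exp (-x ^ 2) : ℝ) : ℂ) = (Real.sqrt Real.pi : ℂ) := by
    have h : ∫ x : ℝ, Real.exp (-x ^ 2) = Real.sqrt Real.pi := by
      simpa using integral_gaussian 1
    rw [← h]
    exact integral_ofReal
  have hZ : ∫ x : ℝ, ((Real.exp (-x ^ 2) : ℝ) : ℂ) / ((x : ℂ) - ζ)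
      = (Real.sqrt Real.pi : ℂ) * plasmaZ ζ := by
    have hπ : (Real.sqrt Real.pi : ℂ) ≠ 0 :=
      Complex.ofReal_ne_zero.mpr (Real.sqrt_ne_zero'.mpr Real.pi_pos)
    rw [plasmaZ]
    simp_rw [hre]
    rw [← mul_assoc, mul_inv_cancel₀ hπ, one_mul]
  rw [h1, hZ]
  ring

lemma beam (vth a : ℝ) (hvth : 0 < vth) (w : ℂ) (hw : 0 < w.im) :
    ∫ v : ℝ, ((-(v + a) / vth ^ 2 * Real.exp (-(v + a) ^ 2 / (2 * vth ^ 2)) : ℝ) : ℂ)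
        / ((v : ℂ) - w)
      = -((Real.sqrt 2 : ℂ) / vth) * (Real.sqrt Real.pi : ℂ) *
        (1 + (w + a) / ((Real.sqrt 2 : ℂ) * vth) * plasmaZ ((w + a) / ((Real.sqrt 2 : ℂ) * vth))) := by
  set c : ℝ := Real.sqrt 2 * vth with hc
  have hc0 : 0 < c := by positivity
  have hcsq : c ^ 2 = 2 * vth ^ 2 := by
    rw [hc, mul_pow, Real.sq_sqrt (by norm_num : (0:ℝ) ≤ 2)]
  set ζ : ℂ := (w + a) / ((Real.sqrt 2 : ℂ) * vth) with hζdef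
  have hcC : ((Real.sqrt 2 : ℂ) * vth) = (c : ℂ) := by push_cast [hc]; ring
  have hcC0 : (c : ℂ) ≠ 0 := by exact_mod_cast hc0.ne'
  have hζim : ζ.im ≠ 0 := by
    have h1 : ζ.im = (w + (a:ℂ)).im / c := by
      rw [hζdef, hcC]; exact Complex.div_ofReal_im _ _
    have h2 : (w + (a:ℂ)).im = w.im := by simp
    rw [h1, h2]
    positivity
  set F : ℝ → ℂ := fun v =>
    ((-(v + a) / vth ^ 2 * Real.exp (-(v + a) ^ 2 / (2 * vth ^ 2)) : ℝ) : ℂ) / ((v : ℂ) - w)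
    with hF
  have step1 : ∫ x : ℝ, F (c * x - a) = c⁻¹ • ∫ v : ℝ, F v := by
    have h1 : ∫ x : ℝ, F (c * x - a) = |c⁻¹| • ∫ y : ℝ, F (y - a) :=
      MeasureTheory.Measure.integral_comp_mul_left (fun y => F (y - a)) c
    rw [h1, abs_of_pos (by positivity)]
    congr 1
    simpa [sub_eq_add_neg] using MeasureTheory.integral_add_right_eq_self F (-a)
  have step2 : ∀ x : ℝ, F (c * x - a)
      = -(1 / (vth : ℂ) ^ 2) * ((x : ℂ) * Complex.exp (-(x : ℂ) ^ 2) / ((x : ℂ) - ζ)) := by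
    intro x
    have hvplus : (c * x - a) + a = c * x := by ring
    have hexp : -(c * x) ^ 2 / (2 * vth ^ 2) = -x ^ 2 := by
      rw [mul_pow, hcsq]
      field_simp
    have hdenom : ((c * x - a : ℝ) : ℂ) - w = (c : ℂ) * ((x : ℂ) - ζ) := by
      rw [hζdef, hcC]
      field_simp
      push_cast
      ring
    rw [hF]
    simp only [hvplus, hexp, hdenom]
    rw [Complex.ofReal_mul]
    have hre : Complex.exp (-(x : ℂ) ^ 2) = ((Real.exp (-x ^ 2) : ℝ) : ℂ) := by
      rw [Complex.ofReal_exp]; push_cast; ring_nf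
    rw [hre]
    have hxζ : (x : ℂ) - ζ ≠ 0 := denom_ne hζim x
    have hvthC : (vth : ℂ) ≠ 0 := by exact_mod_cast hvth.ne'
    field_simp
    push_cast [hc]
    field_simp
  have step3 : ∫ x : ℝ, F (c * x - a)
      = -(1 / (vth : ℂ) ^ 2) * ((Real.sqrt Real.pi : ℂ) * (1 + ζ * plasmaZ ζ)) := by
    rw [integral_congr_ae (Filter.Eventually.of_forall step2), integral_const_mul, key ζ hζim]
  have : (c⁻¹ : ℝ) • (∫ v : ℝ, F v) = -(1 / (vth : ℂ) ^ 2) * ((Real.sqrt Real.pi : ℂ) * (1 + ζ * plasmaZ ζ)) := by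
    rw [← step1, step3]
  have h4 : (∫ v : ℝ, F v) = (c : ℂ) * (-(1 / (vth : ℂ) ^ 2) * ((Real.sqrt Real.pi : ℂ) * (1 + ζ * plasmaZ ζ))) := by
    rw [← this, Complex.real_smul]
    push_cast
    rw [← mul_assoc, mul_inv_cancel₀ hcC0, one_mul]
  rw [h4]
  have hvthC : (vth : ℂ) ≠ 0 := by exact_mod_cast hvth.ne'
  push_cast [hc]
  field_simp

lemma gauss_hasDeriv (vth b : ℝ) (hvth : vth ≠ 0) (v : ℝ) :
    HasDerivAt (fun y : ℝ => Real.exp (-(y + b) ^ 2 / (2 * vth ^ 2)))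
      (-(v + b) / vth ^ 2 * Real.exp (-(v + b) ^ 2 / (2 * vth ^ 2))) v := by
  have h1 : HasDerivAt (fun y : ℝ => -(y + b) ^ 2 / (2 * vth ^ 2))
      (-(2 * (v + b)) / (2 * vth ^ 2)) v := by
    have := (((hasDerivAt_id v).add_const b).pow 2).neg.div_const (2 * vth ^ 2)
    simpa using this
  have h2 := h1.exp
  convert h2 using 1
  field_simp

lemma beam_integrable (vth a : ℝ) (hvth : 0 < vth) (w : ℂ) (hw : 0 < w.im) :
    Integrable (fun v : ℝ =>
      ((-(v + a) / vth ^ 2 * Real.exp (-(v + a) ^ 2 / (2 * vth ^ 2)) : ℝ) : ℂ)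
        / ((v : ℂ) - w)) := by
  have hwim : w.im ≠ 0 := hw.ne'
  apply integrable_div hwim
  · fun_prop
  · have hb : (0 : ℝ) < 1 / (2 * vth ^ 2) := by positivity
    have h1 := ((integrable_mul_exp_neg_mul_sq hb).comp_add_right a).const_mul
      (-(1 : ℝ) / vth ^ 2)
    refine h1.congr (Filter.Eventually.of_forall fun v => ?_)
    show -1 / vth ^ 2 * ((v + a) * Real.exp (-(1 / (2 * vth ^ 2)) * (v + a) ^ 2)) = _
    rw [show -(1 / (2 * vth ^ 2)) * (v + a) ^ 2 = -(v + a) ^ 2 / (2 * vth ^ 2) from by ring]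
    ring

/-- The two-stream dispersion integral identity: for the two-beam equilibrium
`f₀(v) = (1/2)(2π v_th²)^{−1/2} [exp(−(v+u)²/(2v_th²)) + exp(−(v−u)²/(2v_th²))]`
and `Im w > 0`, with `ζ∓ = (w ∓ u)/(√2 v_th)`,
`∫_ℝ f₀′(v)/(v − w) dv = −(1/(2 v_th²)) [(1 + ζ₋ Z(ζ₋)) + (1 + ζ₊ Z(ζ₊))]`. -/
theorem two_stream_dispersion_integral
    (vth u : ℝ) (hvth : 0 < vth) (w : ℂ) (hw : 0 < w.im) :
    (∫ v : ℝ,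
        ((deriv (fun y : ℝ =>
          (1 / 2) * (Real.sqrt (2 * Real.pi * vth ^ 2))⁻¹ *
            (Real.exp (-(y + u) ^ 2 / (2 * vth ^ 2)) +
              Real.exp (-(y - u) ^ 2 / (2 * vth ^ 2)))) v : ℝ) : ℂ) / ((v : ℂ) - w)) =
      -(1 / (2 * (vth : ℂ) ^ 2)) *
        ((1 + (w - (u : ℂ)) / ((Real.sqrt 2 : ℂ) * (vth : ℂ)) *
            plasmaZ ((w - (u : ℂ)) / ((Real.sqrt 2 : ℂ) * (vth : ℂ)))) +
          (1 + (w + (u : ℂ)) / ((Real.sqrt 2 : ℂ) * (vth : ℂ)) *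
            plasmaZ ((w + (u : ℂ)) / ((Real.sqrt 2 : ℂ) * (vth : ℂ))))) := by
  have hvne : vth ≠ 0 := hvth.ne'
  set C : ℝ := (1 / 2) * (Real.sqrt (2 * Real.pi * vth ^ 2))⁻¹ with hC
  have hderiv : ∀ v : ℝ, deriv (fun y : ℝ =>
      (1 / 2) * (Real.sqrt (2 * Real.pi * vth ^ 2))⁻¹ *
        (Real.exp (-(y + u) ^ 2 / (2 * vth ^ 2)) +
          Real.exp (-(y - u) ^ 2 / (2 * vth ^ 2)))) v
      = C * ((-(v + u) / vth ^ 2 * Real.exp (-(v + u) ^ 2 / (2 * vth ^ 2))) +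
             (-(v + -u) / vth ^ 2 * Real.exp (-(v + -u) ^ 2 / (2 * vth ^ 2)))) := by
    intro v
    have h1 := gauss_hasDeriv vth u hvne v
    have h2 : HasDerivAt (fun y : ℝ => Real.exp (-(y - u) ^ 2 / (2 * vth ^ 2)))
        (-(v + -u) / vth ^ 2 * Real.exp (-(v + -u) ^ 2 / (2 * vth ^ 2))) v := by
      simpa [sub_eq_add_neg] using gauss_hasDeriv vth (-u) hvne v
    exact ((h1.add h2).const_mul C).deriv
  have hpt : ∀ v : ℝ,
      ((deriv (fun y : ℝ =>
          (1 / 2) * (Real.sqrt (2 * Real.pi * vth ^ 2))⁻¹ *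
            (Real.exp (-(y + u) ^ 2 / (2 * vth ^ 2)) +
              Real.exp (-(y - u) ^ 2 / (2 * vth ^ 2)))) v : ℝ) : ℂ) / ((v : ℂ) - w)
      = (C : ℂ) *
        (((-(v + u) / vth ^ 2 * Real.exp (-(v + u) ^ 2 / (2 * vth ^ 2)) : ℝ) : ℂ)
            / ((v : ℂ) - w) +
         ((-(v + -u) / vth ^ 2 * Real.exp (-(v + -u) ^ 2 / (2 * vth ^ 2)) : ℝ) : ℂ)
            / ((v : ℂ) - w)) := by
    intro v
    rw [hderiv v]
    push_cast
    ring
  rw [integral_congr_ae (Filter.Eventually.of_forall hpt), integral_const_mul,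
    integral_add (beam_integrable vth u hvth w hw) (beam_integrable vth (-u) hvth w hw),
    beam vth u hvth w hw, beam vth (-u) hvth w hw]
  have harg : w + ((-u : ℝ) : ℂ) = w - (u : ℂ) := by push_cast; ring
  rw [harg]
  have hs2 : Real.sqrt 2 ≠ 0 := by positivity
  have hsπ : Real.sqrt Real.pi ≠ 0 := by positivity
  have hCreal : C * (Real.sqrt 2 / vth * Real.sqrt Real.pi) = 1 / (2 * vth ^ 2) := by
    rw [hC]
    have h1 : Real.sqrt (2 * Real.pi * vth ^ 2)
        = Real.sqrt 2 * Real.sqrt Real.pi * vth := by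
      rw [show 2 * Real.pi * vth ^ 2 = 2 * (Real.pi * vth ^ 2) by ring,
        Real.sqrt_mul (by norm_num), Real.sqrt_mul Real.pi_pos.le,
        Real.sqrt_sq hvth.le]
      ring
    rw [h1]
    field_simp
  have hCC : (C : ℂ) * ((Real.sqrt 2 : ℂ) / vth * (Real.sqrt Real.pi : ℂ))
      = 1 / (2 * (vth : ℂ) ^ 2) := by
    exact_mod_cast congrArg (fun t : ℝ => (t : ℂ)) hCreal
  set Sp : ℂ := 1 + (w + (u : ℂ)) / ((Real.sqrt 2 : ℂ) * vth) *
    plasmaZ ((w + (u : ℂ)) / ((Real.sqrt 2 : ℂ) * vth))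
  set Sm : ℂ := 1 + (w - (u : ℂ)) / ((Real.sqrt 2 : ℂ) * vth) *
    plasmaZ ((w - (u : ℂ)) / ((Real.sqrt 2 : ℂ) * vth))
  linear_combination (-(Sp + Sm)) * hCC
end

section
/- Second integral in the kinetic Weibel dispersion derivation: let v_th > 0, u ∈ ℝ, and define the two-beam Maxwellians f^±(v_x, v_y) = (1/(2π v_th²)) exp(−(v_x² + (v_y ± u)²)/(2 v_th²)). Then for every complex w with Im w > 0, setting ζ = w/(√2 v_th), Σ_{±} ∫_ℝ ∫_ℝ v_y² (∂f^±/∂v_x)(v_x, v_y) / (w − v_x) dv_x dv_y = 2 (1 + ζ Z(ζ)) (1 + u²/v_th²), i.e. equals −Z′(ζ)(1 + u²/v_th²) where Z′(ζ) = −2(1 + ζ Z(ζ)). -/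
open MeasureTheory

/-- The two-beam Maxwellian `f⁺(vx,vy) = (1/(2π v_th²)) exp(−(vx² + (vy + u)²)/(2 v_th²))`. -/
noncomputable def fPlus (vth u vx vy : ℝ) : ℝ :=
  (1 / (2 * Real.pi * vth ^ 2)) * Real.exp (-(vx ^ 2 + (vy + u) ^ 2) / (2 * vth ^ 2))

/-- The two-beam Maxwellian `f⁻(vx,vy) = (1/(2π v_th²)) exp(−(vx² + (vy − u)²)/(2 v_th²))`. -/
noncomputable def fMinus (vth u vx vy : ℝ) : ℝ :=
  (1 / (2 * Real.pi * vth ^ 2)) * Real.exp (-(vx ^ 2 + (vy - u) ^ 2) / (2 * vth ^ 2))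

open Real Complex


lemma sub_ne (ζ : ℂ) (hζ : ζ.im ≠ 0) (x : ℝ) : (x:ℂ) - ζ ≠ 0 := by
  intro h
  apply hζ
  have := congrArg Complex.im h
  simpa using this.symm

lemma norm_cexp_neg_sq (x : ℝ) : ‖Complex.exp (-(x:ℂ)^2)‖ = Real.exp (-(1:ℝ) * x^2) := by
  rw [show -(x:ℂ)^2 = ((-(1:ℝ)*x^2 : ℝ) : ℂ) by push_cast; ring]
  rw [Complex.norm_exp, Complex.ofReal_re]

lemma norm_sub_ge (ζ : ℂ) (x : ℝ) : |ζ.im| ≤ ‖(x:ℂ) - ζ‖ := by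
  have := Complex.abs_im_le_norm ((x:ℂ) - ζ)
  simpa using this

lemma integrable_gauss_div (ζ : ℂ) (hζ : ζ.im ≠ 0) :
    Integrable fun x : ℝ => Complex.exp (-(x:ℂ)^2) / ((x:ℂ) - ζ) := by
  have hζ' : (0:ℝ) < |ζ.im| := abs_pos.mpr hζ
  have h1 : Integrable fun x : ℝ => Real.exp (-(1:ℝ) * x^2) / |ζ.im| :=
    (integrable_exp_neg_mul_sq one_pos).div_const _
  refine h1.mono ?_ ?_
  · apply Continuous.aestronglyMeasurable
    exact (Complex.continuous_exp.comp (by continuity)).div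
      (by continuity) (fun x => sub_ne ζ hζ x)
  · filter_upwards with x
    rw [norm_div, norm_cexp_neg_sq, Real.norm_eq_abs,
      _root_.abs_of_nonneg (by positivity : (0:ℝ) ≤ Real.exp (-(1:ℝ)*x^2) / |ζ.im|)]
    gcongr
    exact norm_sub_ge ζ x

lemma integrable_mul_gauss_div (ζ : ℂ) (hζ : ζ.im ≠ 0) :
    Integrable fun x : ℝ => (x:ℂ) * Complex.exp (-(x:ℂ)^2) / ((x:ℂ) - ζ) := by
  have hζ' : (0:ℝ) < |ζ.im| := abs_pos.mpr hζ
  have hbase : Integrable fun x : ℝ => x * Real.exp (-(1:ℝ) * x^2) := by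
    have := integrable_rpow_mul_exp_neg_mul_sq (b := 1) one_pos (s := 1) (by norm_num)
    refine this.congr ?_
    filter_upwards with x
    rw [Real.rpow_one]
  have h1 : Integrable fun x : ℝ => |x| * Real.exp (-(1:ℝ) * x^2) / |ζ.im| := by
    refine (hbase.abs.congr ?_).div_const _
    filter_upwards with x
    rw [abs_mul, _root_.abs_of_nonneg (Real.exp_pos _).le]
  refine h1.mono ?_ ?_
  · apply Continuous.aestronglyMeasurable
    exact ((Complex.continuous_ofReal.mul
      (Complex.continuous_exp.comp (by continuity)))).div
      (by continuity) (fun x => sub_ne ζ hζ x)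
  · filter_upwards with x
    rw [norm_div, norm_mul, norm_cexp_neg_sq, Complex.norm_real, Real.norm_eq_abs,
      Real.norm_eq_abs,
      _root_.abs_of_nonneg (by positivity : (0:ℝ) ≤ |x| * Real.exp (-(1:ℝ)*x^2) / |ζ.im|)]
    gcongr
    exact norm_sub_ge ζ x


lemma integrable_mul_gauss {b : ℝ} (hb : 0 < b) :
    Integrable fun x : ℝ => x * Real.exp (-b * x^2) := by
  have := integrable_rpow_mul_exp_neg_mul_sq hb (s := 1) (by norm_num)
  refine this.congr ?_
  filter_upwards with x
  rw [Real.rpow_one]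

lemma integrable_sq_gauss {b : ℝ} (hb : 0 < b) :
    Integrable fun x : ℝ => x^2 * Real.exp (-b * x^2) := by
  have := integrable_rpow_mul_exp_neg_mul_sq hb (s := 2) (by norm_num)
  refine this.congr ?_
  filter_upwards with x
  rw [show (2:ℝ) = ((2:ℕ):ℝ) by norm_num, Real.rpow_natCast]

lemma integral_mul_gauss {b : ℝ} (hb : 0 < b) :
    ∫ x : ℝ, x * Real.exp (-b * x^2) = 0 := by
  have hb' : b ≠ 0 := hb.ne'
  refine integral_eq_zero_of_hasDerivAt_of_integrable
    (f := fun x : ℝ => -(2*b)⁻¹ * Real.exp (-b * x^2)) ?_ (integrable_mul_gauss hb)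
    (((integrable_exp_neg_mul_sq hb).const_mul _))
  intro x
  have h := (((hasDerivAt_pow 2 x).const_mul (-b)).exp.const_mul (-(2*b)⁻¹))
  convert h using 1
  case e'_4 => rfl
  field_simp
  ring

lemma integral_sq_gauss {b : ℝ} (hb : 0 < b) :
    ∫ x : ℝ, x^2 * Real.exp (-b * x^2) = Real.sqrt (π/b) / (2*b) := by
  have hb' : b ≠ 0 := hb.ne'
  have hzero : ∫ x : ℝ, (Real.exp (-b * x^2) - 2*b*(x^2 * Real.exp (-b * x^2))) = 0 := by
    refine integral_eq_zero_of_hasDerivAt_of_integrable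
      (f := fun x : ℝ => x * Real.exp (-b * x^2)) ?_
      ((integrable_exp_neg_mul_sq hb).sub ((integrable_sq_gauss hb).const_mul _))
      (integrable_mul_gauss hb)
    intro x
    have h := (hasDerivAt_id x).mul ((hasDerivAt_pow 2 x).const_mul (-b)).exp
    convert h using 1
    case e'_4 => rfl
    case e'_8 => rfl
    simp
    ring
  rw [integral_sub (integrable_exp_neg_mul_sq hb)
    ((integrable_sq_gauss hb).const_mul _), integral_const_mul,
    integral_gaussian] at hzero
  have h2b : (2*b) ≠ 0 := by positivity
  field_simp at hzero ⊢
  linarith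

lemma moment_shift (vth s : ℝ) (hvth : 0 < vth) :
    ∫ x : ℝ, x^2 * Real.exp (-(x+s)^2 / (2*vth^2)) =
      Real.sqrt 2 * Real.sqrt π * vth * (vth^2 + s^2) := by
  set b : ℝ := (2*vth^2)⁻¹ with hbdef
  have hb : 0 < b := by positivity
  have hb' : b ≠ 0 := hb.ne'
  have key : ∀ x : ℝ, x^2 * Real.exp (-(x+s)^2 / (2*vth^2)) =
      (fun t : ℝ => (t - s)^2 * Real.exp (-b * t^2)) (x + s) := by
    intro x
    simp only [add_sub_cancel_right]
    congr 1
    rw [hbdef]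
    field_simp
  rw [funext key, integral_add_right_eq_self (fun t : ℝ => (t - s)^2 * Real.exp (-b * t^2)) s]
  have expand : ∀ t : ℝ, (t - s)^2 * Real.exp (-b * t^2) =
      t^2 * Real.exp (-b * t^2) - (2*s) * (t * Real.exp (-b * t^2))
        + s^2 * Real.exp (-b * t^2) := by
    intro t; ring
  have hint1 : Integrable (fun t : ℝ => t^2 * Real.exp (-b*t^2) - 2*s*(t*Real.exp (-b*t^2))) :=
    (integrable_sq_gauss hb).sub ((integrable_mul_gauss hb).const_mul _)
  have hint2 : Integrable (fun t : ℝ => s^2 * Real.exp (-b*t^2)) :=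
    (integrable_exp_neg_mul_sq hb).const_mul _
  have hint3 : Integrable (fun t : ℝ => 2*s*(t*Real.exp (-b*t^2))) :=
    (integrable_mul_gauss hb).const_mul _
  rw [funext expand, integral_add hint1 hint2,
    integral_sub (integrable_sq_gauss hb) hint3,
    integral_const_mul, integral_const_mul, integral_mul_gauss hb, integral_sq_gauss hb,
    integral_gaussian]
  have hπb : π / b = π * (2 * vth^2) := by rw [hbdef]; field_simp
  rw [hπb, Real.sqrt_mul Real.pi_pos.le, Real.sqrt_mul two_pos.le,
    Real.sqrt_sq hvth.le]
  rw [hbdef]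
  field_simp
  ring

lemma integrable_cexp_sq : Integrable fun x : ℝ => Complex.exp (-(x:ℂ)^2) := by
  have := integrable_cexp_neg_mul_sq (b := 1) (by norm_num)
  refine this.congr ?_
  filter_upwards with x
  norm_num

lemma integral_cexp_sq : ∫ x : ℝ, Complex.exp (-(x:ℂ)^2) = (Real.sqrt π : ℂ) := by
  have h : ∀ x : ℝ, Complex.exp (-(x:ℂ)^2) = ((Real.exp (-(1:ℝ)*x^2) : ℝ) : ℂ) := by
    intro x
    rw [Complex.ofReal_exp]
    push_cast
    ring_nf
  rw [funext h]
  calc ∫ x : ℝ, ((Real.exp (-(1:ℝ)*x^2) : ℝ) : ℂ)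
      = ((∫ x : ℝ, Real.exp (-(1:ℝ)*x^2) : ℝ) : ℂ) := integral_ofReal
    _ = (Real.sqrt π : ℂ) := by rw [integral_gaussian]; norm_num

lemma sqrtπ_ne : (Real.sqrt π : ℂ) ≠ 0 := by
  norm_cast
  positivity

lemma integral_div_eq_plasmaZ (ζ : ℂ) :
    ∫ x : ℝ, Complex.exp (-(x:ℂ)^2) / ((x:ℂ) - ζ) = (Real.sqrt π : ℂ) * plasmaZ ζ := by
  rw [plasmaZ, ← mul_assoc, mul_inv_cancel₀ sqrtπ_ne, one_mul]

lemma integral_key (ζ : ℂ) (hζ : ζ.im ≠ 0) :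
    ∫ x : ℝ, (x:ℂ) * Complex.exp (-(x:ℂ)^2) / (ζ - x) =
      -(Real.sqrt π : ℂ) * (1 + ζ * plasmaZ ζ) := by
  have hpt : ∀ x : ℝ, (x:ℂ) * Complex.exp (-(x:ℂ)^2) / (ζ - x) =
      -Complex.exp (-(x:ℂ)^2) + (-ζ) * (Complex.exp (-(x:ℂ)^2) / ((x:ℂ) - ζ)) := by
    intro x
    have h1 : (x:ℂ) - ζ ≠ 0 := sub_ne ζ hζ x
    have h2 : ζ - (x:ℂ) ≠ 0 := by
      rw [← neg_sub]
      exact neg_ne_zero.mpr h1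
    field_simp
    ring
  have hi1 : Integrable (fun x : ℝ => -Complex.exp (-(x:ℂ)^2)) := integrable_cexp_sq.neg
  have hi2 : Integrable (fun x : ℝ => (-ζ) * (Complex.exp (-(x:ℂ)^2) / ((x:ℂ) - ζ))) :=
    (integrable_gauss_div ζ hζ).const_mul _
  rw [funext hpt, integral_add hi1 hi2, integral_neg, integral_cexp_sq,
    integral_const_mul, integral_div_eq_plasmaZ]
  ring

lemma hasDerivAt_fPlus (vth u vy : ℝ) (hvth : vth ≠ 0) (vx : ℝ) :
    HasDerivAt (fun t : ℝ => fPlus vth u t vy)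
      (-(vx/vth^2) * fPlus vth u vx vy) vx := by
  unfold fPlus
  have h := ((((hasDerivAt_pow 2 vx).add_const ((vy+u)^2)).neg.div_const
    (2*vth^2)).exp.const_mul (1 / (2 * Real.pi * vth ^ 2)))
  convert h using 1
  have hπ : Real.pi ≠ 0 := Real.pi_ne_zero
  case e'_4 => rfl
  case e'_5 => rfl
  case e'_8 => rfl
  simp only [Pi.neg_apply]
  field_simp
  ring

lemma main_aux (vth s : ℝ) (hvth : 0 < vth) (w : ℂ) (hw : 0 < w.im) :
    (∫ vy : ℝ, ∫ vx : ℝ,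
        (vy : ℂ) ^ 2 * ((deriv (fun t : ℝ => fPlus vth s t vy) vx : ℝ) : ℂ) / (w - (vx : ℂ))) =
      (1 + w / ((Real.sqrt 2 : ℂ) * (vth : ℂ)) *
          plasmaZ (w / ((Real.sqrt 2 : ℂ) * (vth : ℂ)))) * (1 + (s : ℂ) ^ 2 / (vth : ℂ) ^ 2) := by
  have hv : vth ≠ 0 := hvth.ne'
  set c : ℝ := Real.sqrt 2 * vth with hcdef
  have hc : 0 < c := by positivity
  have hcC : ((c:ℝ):ℂ) = (Real.sqrt 2 : ℂ) * (vth : ℂ) := by rw [hcdef]; push_cast; ring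
  set ζ : ℂ := w / (c:ℂ) with hζdef
  have hζim : ζ.im = c⁻¹ * w.im := by
    rw [hζdef, div_eq_mul_inv, ← Complex.ofReal_inv, mul_comm, Complex.im_ofReal_mul]
  have hζ : ζ.im ≠ 0 := by
    rw [hζim]
    positivity
  set Gc : ℝ → ℂ := fun v => (v:ℂ) * Complex.exp (-(v:ℂ)^2 / (2*(vth:ℂ)^2)) / (w - v)
    with hGcdef
  have hc2 : ((c:ℝ):ℂ)^2 = 2*(vth:ℂ)^2 := by
    rw [hcC, mul_pow]
    norm_cast
    rw [Real.sq_sqrt two_pos.le]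
  have hcne : ((c:ℝ):ℂ) ≠ 0 := by
    norm_cast
    exact hc.ne'
  have hvne : (2:ℂ)*(vth:ℂ)^2 ≠ 0 := by
    norm_cast
    positivity
  have hGc : ∀ x : ℝ, Gc (c * x) = (x:ℂ) * Complex.exp (-(x:ℂ)^2) / (ζ - x) := by
    intro x
    rw [hGcdef]
    simp only
    push_cast
    rw [show -((c:ℂ)*(x:ℂ))^2 / (2*(vth:ℂ)^2) = -(x:ℂ)^2 * (((c:ℂ)^2) / (2*(vth:ℂ)^2)) by ring,
      show ((c:ℂ):ℂ)^2 = ((c:ℝ):ℂ)^2 from rfl, hc2, div_self hvne, mul_one]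
    rw [show w - (c:ℂ)*(x:ℂ) = (c:ℂ) * (ζ - x) by rw [hζdef]; field_simp]
    rw [show (c:ℂ)*(x:ℂ) * Complex.exp (-(x:ℂ)^2) = (c:ℂ) * ((x:ℂ) * Complex.exp (-(x:ℂ)^2))
      by ring]
    exact mul_div_mul_left _ _ hcne
  have hK : ∫ v : ℝ, Gc v = (c:ℂ) * (-(Real.sqrt π : ℂ) * (1 + ζ * plasmaZ ζ)) := by
    have hcv := MeasureTheory.Measure.integral_comp_mul_left Gc c
    rw [funext hGc, integral_key ζ hζ, abs_of_pos (inv_pos.mpr hc)] at hcv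
    have h := (inv_smul_eq_iff₀ hc.ne').mp hcv.symm
    rw [h, Complex.real_smul]
  have hder : ∀ vy vx : ℝ, deriv (fun t : ℝ => fPlus vth s t vy) vx
      = -(vx/vth^2) * fPlus vth s vx vy := fun vy vx =>
    (hasDerivAt_fPlus vth s vy hv vx).deriv
  simp only [hder]
  set B : ℂ := ((-(1/(2*Real.pi*vth^2)/vth^2) : ℝ) : ℂ) with hBdef
  have hinner : ∀ vy : ℝ,
      (∫ vx : ℝ, (vy:ℂ)^2 * ((-(vx/vth^2) * fPlus vth s vx vy : ℝ) : ℂ) / (w - (vx:ℂ)))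
      = ((vy^2 * Real.exp (-(vy+s)^2 / (2*vth^2)) : ℝ) : ℂ) * (B * ∫ v : ℝ, Gc v) := by
    intro vy
    rw [← integral_const_mul, ← integral_const_mul]
    congr 1
    funext vx
    rw [hGcdef, hBdef]
    simp only [fPlus]
    rw [show (-(vx^2 + (vy+s)^2) / (2*vth^2)) =
      (-(vx^2) / (2*vth^2)) + (-((vy+s)^2) / (2*vth^2)) by ring, Real.exp_add]
    push_cast
    ring
  simp only [hinner]
  rw [integral_mul_const]
  have hOf : (∫ vy : ℝ, ((vy^2 * Real.exp (-(vy+s)^2 / (2*vth^2)) : ℝ) : ℂ))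
      = ((∫ vy : ℝ, vy^2 * Real.exp (-(vy+s)^2 / (2*vth^2)) : ℝ) : ℂ) := integral_ofReal
  rw [hOf, moment_shift vth s hvth, hK]
  have hζeq : w / ((Real.sqrt 2 : ℂ) * (vth : ℂ)) = ζ := by rw [hζdef, hcC]
  rw [hζeq, hBdef]
  have hRval : (Real.sqrt 2 * Real.sqrt π * vth * (vth^2+s^2)) * (-(1/(2*Real.pi*vth^2)/vth^2))
      * (c * -(Real.sqrt π)) = 1 + s^2/vth^2 := by
    rw [hcdef]
    have h2 : Real.sqrt 2 * Real.sqrt 2 = 2 := Real.mul_self_sqrt two_pos.le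
    have hpi2 : Real.sqrt π * Real.sqrt π = π := Real.mul_self_sqrt Real.pi_pos.le
    have hπ : Real.pi ≠ 0 := Real.pi_ne_zero
    field_simp
    linear_combination (Real.sqrt π^2) * h2
      + 2 * hpi2
  calc ((Real.sqrt 2 * Real.sqrt π * vth * (vth^2+s^2) : ℝ) : ℂ)
        * (((-(1/(2*Real.pi*vth^2)/vth^2) : ℝ) : ℂ)
          * ((c:ℂ) * (-(Real.sqrt π : ℂ) * (1 + ζ * plasmaZ ζ))))
      = (((Real.sqrt 2 * Real.sqrt π * vth * (vth^2+s^2)) * (-(1/(2*Real.pi*vth^2)/vth^2))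
          * (c * -(Real.sqrt π)) : ℝ) : ℂ) * (1 + ζ * plasmaZ ζ) := by
        push_cast
        ring
    _ = (1 + ζ * plasmaZ ζ) * (1 + (s : ℂ)^2 / (vth:ℂ)^2) := by
        rw [hRval]
        push_cast
        ring

/-- Second integral in the kinetic Weibel dispersion derivation: for `Im w > 0` and
`ζ = w/(√2 v_th)`,
`Σ_± ∫∫ v_y² (∂f^±/∂v_x)/(w − v_x) dv_x dv_y = 2(1 + ζ Z(ζ))(1 + u²/v_th²)`. -/
theorem weibel_second_integral
    (vth u : ℝ) (hvth : 0 < vth) (w : ℂ) (hw : 0 < w.im) :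
    ((∫ vy : ℝ, ∫ vx : ℝ,
        (vy : ℂ) ^ 2 * ((deriv (fun t : ℝ => fPlus vth u t vy) vx : ℝ) : ℂ) / (w - (vx : ℂ))) +
      (∫ vy : ℝ, ∫ vx : ℝ,
        (vy : ℂ) ^ 2 * ((deriv (fun t : ℝ => fMinus vth u t vy) vx : ℝ) : ℂ) / (w - (vx : ℂ)))) =
      2 * (1 + w / ((Real.sqrt 2 : ℂ) * (vth : ℂ)) *
          plasmaZ (w / ((Real.sqrt 2 : ℂ) * (vth : ℂ)))) *
        (1 + (u : ℂ) ^ 2 / (vth : ℂ) ^ 2) := by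
  have hfm : ∀ t vy : ℝ, fMinus vth u t vy = fPlus vth (-u) t vy := by
    intro t vy
    simp [fMinus, fPlus, sub_eq_add_neg]
  simp only [hfm]
  rw [main_aux vth u hvth w hw, main_aux vth (-u) hvth w hw]
  push_cast
  ring
end

section
/- Third integral in the kinetic Weibel dispersion derivation: let v_th > 0, u ∈ ℝ, and define the two-beam Maxwellians f^±(v_x, v_y) = (1/(2π v_th²)) exp(−(v_x² + (v_y ± u)²)/(2 v_th²)). Then for every complex w with Im w > 0, setting ζ = w/(√2 v_th), Σ_{±} ∫_ℝ ∫_ℝ v_y (∂f^±/∂v_y)(v_x, v_y) / (w − v_x) dv_x dv_y = (√2 / v_th) Z(ζ). -/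
open MeasureTheory

lemma weibel_aux (vth c : ℝ) (hvth : 0 < vth) (w : ℂ) (hw : 0 < w.im) :
    (∫ vy : ℝ, ∫ vx : ℝ,
        (vy : ℂ) * ((deriv (fun t : ℝ => fPlus vth c vx t) vy : ℝ) : ℂ) / (w - (vx : ℂ)))
    = ((Real.sqrt 2 : ℂ) / (2 * (vth : ℂ))) *
        plasmaZ (w / ((Real.sqrt 2 : ℂ) * (vth : ℂ))) := by
  set b : ℝ := (2 * vth ^ 2)⁻¹ with hbdef
  have hb : 0 < b := by positivity
  set A : ℝ := 1 / (2 * Real.pi * vth ^ 2) with hAdef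
  set g : ℝ → ℝ := fun t => Real.exp (-b * (t + c) ^ 2) with hgdef
  set dg : ℝ → ℝ := fun t => -b * (2 * (t + c)) * Real.exp (-b * (t + c) ^ 2) with hdgdef
  -- derivative of g
  have hg : ∀ t : ℝ, HasDerivAt g (dg t) t := by
    intro t
    have h1 : HasDerivAt (fun t : ℝ => -b * (t + c) ^ 2) (-b * (2 * (t + c))) t := by
      have := (((hasDerivAt_id t).add_const c).pow 2).const_mul (-b)
      refine this.congr_deriv ?_
      simp only [id_eq]
      ring
    have := h1.exp
    convert this using 1
    simp only [hgdef, hdgdef, id_eq]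
    ring
  -- factorization of fPlus
  have hf : ∀ vx t : ℝ, fPlus vth c vx t = A * Real.exp (-b * vx ^ 2) * g t := by
    intro vx t
    have hee : Real.exp (-(vx ^ 2 + (t + c) ^ 2) / (2 * vth ^ 2))
        = Real.exp (-b * vx ^ 2) * Real.exp (-b * (t + c) ^ 2) := by
      rw [← Real.exp_add]
      congr 1
      rw [hbdef]
      field_simp
      ring
    rw [fPlus, hee, hAdef]
    simp only [hgdef]
    ring
  have hderiv : ∀ vx vy : ℝ, deriv (fun t : ℝ => fPlus vth c vx t) vy
      = A * Real.exp (-b * vx ^ 2) * dg vy := by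
    intro vx vy
    have heq : (fun t : ℝ => fPlus vth c vx t) = fun t => A * Real.exp (-b * vx ^ 2) * g t :=
      funext (hf vx)
    rw [heq]
    exact ((hg vy).const_mul _).deriv
  -- inner integral
  set J : ℂ := ∫ vx : ℝ, ((A * Real.exp (-b * vx ^ 2) : ℝ) : ℂ) / (w - (vx : ℂ)) with hJdef
  have hinner : ∀ vy : ℝ,
      (∫ vx : ℝ, (vy : ℂ) * ((deriv (fun t : ℝ => fPlus vth c vx t) vy : ℝ) : ℂ) / (w - (vx : ℂ)))
      = ((vy * dg vy : ℝ) : ℂ) * J := by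
    intro vy
    rw [hJdef, ← integral_const_mul]
    congr 1; funext vx
    rw [hderiv vx vy]
    push_cast
    ring
  have houter : (∫ vy : ℝ, ∫ vx : ℝ,
      (vy : ℂ) * ((deriv (fun t : ℝ => fPlus vth c vx t) vy : ℝ) : ℂ) / (w - (vx : ℂ)))
      = ((∫ vy : ℝ, vy * dg vy : ℝ) : ℂ) * J := by
    simp_rw [hinner]
    rw [integral_mul_const]
    congr 1
    exact integral_ofReal
  -- integrability facts
  have Ig : Integrable (fun s : ℝ => Real.exp (-b * s ^ 2)) := integrable_exp_neg_mul_sq hb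
  have I1 : Integrable (fun s : ℝ => s * Real.exp (-b * s ^ 2)) := integrable_mul_exp_neg_mul_sq hb
  have I2 : Integrable (fun s : ℝ => s ^ 2 * Real.exp (-b * s ^ 2)) := by
    have h := integrable_rpow_mul_exp_neg_mul_sq hb (by norm_num : (-1:ℝ) < 2)
    have h2 : ∀ x : ℝ, x ^ (2 : ℝ) = x ^ 2 := fun x => by
      rw [show (2:ℝ) = ((2:ℕ):ℝ) by norm_num, Real.rpow_natCast]
    simpa only [h2] using h
  have hIgg : Integrable g := by
    have := Ig.comp_add_right c
    simpa [hgdef] using this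
  have hxg : Integrable (fun t : ℝ => t * g t) := by
    have h0 : Integrable (fun s : ℝ => s * Real.exp (-b * s ^ 2) - c * Real.exp (-b * s ^ 2)) :=
      I1.sub (Ig.const_mul c)
    have h1 := h0.comp_add_right c
    exact h1.congr (Filter.Eventually.of_forall fun t => by simp only [hgdef]; ring)
  have hxdg : Integrable (fun t : ℝ => t * dg t) := by
    have h0 : Integrable (fun s : ℝ =>
        -(2*b) * (s ^ 2 * Real.exp (-b * s ^ 2)) + (2*b*c) * (s * Real.exp (-b * s ^ 2))) :=
      (I2.const_mul _).add (I1.const_mul _)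
    have h1 := h0.comp_add_right c
    exact h1.congr (Filter.Eventually.of_forall fun t => by simp only [hdgdef]; ring)
  -- integration by parts
  have hibp : (∫ t : ℝ, t * dg t) = - ∫ t : ℝ, g t := by
    have h := integral_mul_deriv_eq_deriv_mul_of_integrable
      (u := fun t : ℝ => t) (v := g) (u' := fun _ => (1:ℝ)) (v' := dg)
      (fun t _ => hasDerivAt_id t) (fun t _ => hg t)
      (by simpa [Pi.mul_def] using hxdg)
      (by simpa [Pi.mul_def] using hIgg)
      (by simpa [Pi.mul_def] using hxg)
    simpa using h
  have hgint : (∫ t : ℝ, g t) = Real.sqrt (Real.pi / b) := by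
    have h := integral_add_right_eq_self (μ := volume) (fun s : ℝ => Real.exp (-b * s ^ 2)) c
    calc (∫ t : ℝ, g t) = ∫ t : ℝ, Real.exp (-b * (t + c) ^ 2) := rfl
      _ = ∫ s : ℝ, Real.exp (-b * s ^ 2) := h
      _ = Real.sqrt (Real.pi / b) := integral_gaussian b
  -- compute J
  have hc2 : (0:ℝ) < Real.sqrt 2 * vth := by positivity
  have hac : ((Real.sqrt 2 * vth : ℝ) : ℂ) ≠ 0 := by exact_mod_cast hc2.ne'
  have hJA : J = (A : ℂ) * ∫ vx : ℝ, ((Real.exp (-b * vx ^ 2) : ℝ) : ℂ) / (w - (vx : ℂ)) := by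
    rw [hJdef, ← integral_const_mul]
    congr 1; funext vx; push_cast; ring
  have hsub := MeasureTheory.Measure.integral_comp_mul_left
      (fun vx : ℝ => ((Real.exp (-b * vx ^ 2) : ℝ) : ℂ) / (w - (vx : ℂ))) (Real.sqrt 2 * vth)
  have hK : (∫ vx : ℝ, ((Real.exp (-b * vx ^ 2) : ℝ) : ℂ) / (w - (vx : ℂ)))
      = (Real.sqrt 2 * vth : ℝ) •
        ∫ x : ℝ, ((Real.exp (-b * ((Real.sqrt 2 * vth) * x) ^ 2) : ℝ) : ℂ)
          / (w - (((Real.sqrt 2 * vth) * x : ℝ) : ℂ)) := by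
    rw [show (∫ x : ℝ, ((Real.exp (-b * ((Real.sqrt 2 * vth) * x) ^ 2) : ℝ) : ℂ)
          / (w - (((Real.sqrt 2 * vth) * x : ℝ) : ℂ)))
        = |(Real.sqrt 2 * vth)⁻¹| • (∫ vx : ℝ, ((Real.exp (-b * vx ^ 2) : ℝ) : ℂ) / (w - (vx : ℂ)))
        from hsub]
    rw [smul_smul, abs_of_pos (inv_pos.mpr hc2), mul_inv_cancel₀ hc2.ne', one_smul]
  -- pointwise identity under substitution
  have hexpx : ∀ x : ℝ, -b * ((Real.sqrt 2 * vth) * x) ^ 2 = -x ^ 2 := by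
    intro x
    have h2 : (Real.sqrt 2) ^ 2 = 2 := Real.sq_sqrt (by norm_num)
    have : ((Real.sqrt 2 * vth) * x) ^ 2 = 2 * vth ^ 2 * x ^ 2 := by
      rw [mul_pow, mul_pow, h2]
    rw [this, hbdef]
    field_simp
  have hzim : ((w / ((Real.sqrt 2 : ℂ) * (vth : ℂ))).im) = w.im / (Real.sqrt 2 * vth) := by
    rw [show (Real.sqrt 2 : ℂ) * (vth : ℂ) = ((Real.sqrt 2 * vth : ℝ) : ℂ) by push_cast; ring]
    rw [Complex.div_ofReal_im]
  have hpoint : ∀ x : ℝ,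
      ((Real.exp (-b * ((Real.sqrt 2 * vth) * x) ^ 2) : ℝ) : ℂ)
        / (w - (((Real.sqrt 2 * vth) * x : ℝ) : ℂ))
      = (-(1:ℂ) / ((Real.sqrt 2 : ℂ) * (vth : ℂ))) *
        (Complex.exp (-(x:ℂ) ^ 2) / ((x:ℂ) - w / ((Real.sqrt 2 : ℂ) * (vth : ℂ)))) := by
    intro x
    have hnum : ((Real.exp (-b * ((Real.sqrt 2 * vth) * x) ^ 2) : ℝ) : ℂ)
        = Complex.exp (-(x:ℂ) ^ 2) := by
      rw [hexpx x, Complex.ofReal_exp]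
      congr 1
      push_cast
      ring
    have hden1 : w - (((Real.sqrt 2 * vth) * x : ℝ) : ℂ) ≠ 0 := by
      intro h
      have := congrArg Complex.im h
      simp [Complex.sub_im, Complex.ofReal_im] at this
      linarith [hw, this]
    have hden2 : (x:ℂ) - w / ((Real.sqrt 2 : ℂ) * (vth : ℂ)) ≠ 0 := by
      intro h
      have := congrArg Complex.im h
      rw [Complex.sub_im, Complex.ofReal_im, hzim] at this
      have h0 : w.im / (Real.sqrt 2 * vth) = 0 := by
        have := this.symm
        simpa using this
      rcases div_eq_zero_iff.mp h0 with h' | h'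
      · exact absurd h' (ne_of_gt hw)
      · exact absurd h' (ne_of_gt hc2)
    have ha2 : (Real.sqrt 2 : ℂ) * (vth : ℂ) ≠ 0 := by
      rw [show (Real.sqrt 2 : ℂ) * (vth : ℂ) = ((Real.sqrt 2 * vth : ℝ) : ℂ) by push_cast; ring]
      exact hac
    have e1 : w - (((Real.sqrt 2 * vth) * x : ℝ) : ℂ)
        = -((Real.sqrt 2 : ℂ) * (vth : ℂ)) *
          ((x:ℂ) - w / ((Real.sqrt 2 : ℂ) * (vth : ℂ))) := by
      have hmd : ((Real.sqrt 2 : ℂ) * (vth : ℂ)) * (w / ((Real.sqrt 2 : ℂ) * (vth : ℂ))) = w := by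
        exact mul_div_cancel₀ w ha2
      push_cast
      linear_combination -hmd
    rw [hnum, e1, neg_mul, div_neg, div_mul_eq_div_div_swap]
    rw [neg_div, div_div]
    rw [div_eq_mul_inv, div_eq_mul_inv, mul_inv]
    ring
  have hKex : (∫ x : ℝ, ((Real.exp (-b * ((Real.sqrt 2 * vth) * x) ^ 2) : ℝ) : ℂ)
          / (w - (((Real.sqrt 2 * vth) * x : ℝ) : ℂ)))
      = (-(1:ℂ) / ((Real.sqrt 2 : ℂ) * (vth : ℂ))) *
        ((Real.sqrt Real.pi : ℂ) * plasmaZ (w / ((Real.sqrt 2 : ℂ) * (vth : ℂ)))) := by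
    simp_rw [hpoint]
    rw [integral_const_mul]
    congr 1
    rw [plasmaZ]
    rw [← mul_assoc, mul_inv_cancel₀
      (by exact_mod_cast (Real.sqrt_ne_zero'.mpr Real.pi_pos) : (Real.sqrt Real.pi : ℂ) ≠ 0), one_mul]
  -- put everything together
  rw [houter, hibp, hgint, hJA, hK, hKex]
  have hsq : Real.sqrt (Real.pi / b) = Real.sqrt Real.pi * (Real.sqrt 2 * vth) := by
    rw [hbdef, division_def, inv_inv, Real.sqrt_mul Real.pi_pos.le, Real.sqrt_mul (by norm_num : (0:ℝ) ≤ 2)]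
    rw [Real.sqrt_sq hvth.le]
  rw [hsq, hAdef]
  have hπ : (Real.sqrt Real.pi : ℝ) ^ 2 = Real.pi := Real.sq_sqrt Real.pi_pos.le
  have hs2 : (Real.sqrt 2 : ℝ) ^ 2 = 2 := Real.sq_sqrt (by norm_num)
  have hπc : ((Real.sqrt Real.pi : ℝ) : ℂ) ^ 2 = (Real.pi : ℂ) := by exact_mod_cast congrArg (Complex.ofReal) hπ
  have hs2c : ((Real.sqrt 2 : ℝ) : ℂ) ^ 2 = 2 := by exact_mod_cast congrArg (Complex.ofReal) hs2
  have hπne : (Real.pi : ℂ) ≠ 0 := by exact_mod_cast Real.pi_ne_zero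
  have hvthne : (vth : ℂ) ≠ 0 := by exact_mod_cast hvth.ne'
  have hs2ne : ((Real.sqrt 2 : ℝ) : ℂ) ≠ 0 := by
    exact_mod_cast (Real.sqrt_ne_zero'.mpr (by norm_num : (0:ℝ) < 2))
  push_cast
  rw [Complex.real_smul]
  push_cast
  field_simp
  ring_nf
  rw [hπc]
  ring

/-- Third integral in the kinetic Weibel dispersion derivation: for `Im w > 0` and
`ζ = w/(√2 v_th)`, `Σ_± ∫∫ v_y (∂f^±/∂v_y)/(w − v_x) dv_x dv_y = (√2/v_th) Z(ζ)`. -/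
theorem weibel_third_integral
    (vth u : ℝ) (hvth : 0 < vth) (w : ℂ) (hw : 0 < w.im) :
    ((∫ vy : ℝ, ∫ vx : ℝ,
        (vy : ℂ) * ((deriv (fun t : ℝ => fPlus vth u vx t) vy : ℝ) : ℂ) / (w - (vx : ℂ))) +
      (∫ vy : ℝ, ∫ vx : ℝ,
        (vy : ℂ) * ((deriv (fun t : ℝ => fMinus vth u vx t) vy : ℝ) : ℂ) / (w - (vx : ℂ)))) =
      ((Real.sqrt 2 : ℂ) / (vth : ℂ)) *
        plasmaZ (w / ((Real.sqrt 2 : ℂ) * (vth : ℂ))) := by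
  have hmf : ∀ vx : ℝ, (fun t : ℝ => fMinus vth u vx t) = fun t : ℝ => fPlus vth (-u) vx t := by
    intro vx
    funext t
    rw [fMinus, fPlus]
    ring_nf
  have h1 := weibel_aux vth u hvth w hw
  have h2 := weibel_aux vth (-u) hvth w hw
  have hrw : (∫ vy : ℝ, ∫ vx : ℝ,
      (vy : ℂ) * ((deriv (fun t : ℝ => fMinus vth u vx t) vy : ℝ) : ℂ) / (w - (vx : ℂ)))
      = ∫ vy : ℝ, ∫ vx : ℝ,
      (vy : ℂ) * ((deriv (fun t : ℝ => fPlus vth (-u) vx t) vy : ℝ) : ℂ) / (w - (vx : ℂ)) := by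
    simp_rw [hmf]
  rw [hrw, h1, h2]
  have hvthne : (vth : ℂ) ≠ 0 := by exact_mod_cast hvth.ne'
  field_simp
  ring
end

section
/- Fourth integral in the kinetic Weibel dispersion derivation: let v_th > 0, u ∈ ℝ, and define the two-beam Maxwellians f^±(v_x, v_y) = (1/(2π v_th²)) exp(−(v_x² + (v_y ± u)²)/(2 v_th²)). Then for every complex w with Im w > 0, setting ζ = w/(√2 v_th), Σ_{±} ∫_ℝ ∫_ℝ v_x v_y (∂f^±/∂v_y)(v_x, v_y) / (w − v_x) dv_x dv_y = 2 (1 + ζ Z(ζ)), i.e. equals −Z′(ζ) where Z′(ζ) = −2(1 + ζ Z(ζ)). -/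
open MeasureTheory

open Real Filter


lemma tendsto_exp_neg_sq_atTop {b : ℝ} (hb : 0 < b) :
    Tendsto (fun x : ℝ => Real.exp (-b * x ^ 2)) atTop (nhds 0) := by
  have h2 : Tendsto (fun x : ℝ => b * x ^ 2) atTop atTop :=
    (tendsto_pow_atTop two_ne_zero).const_mul_atTop hb
  exact (Real.tendsto_exp_atBot.comp (tendsto_neg_atTop_atBot.comp h2)).congr
    (fun x => by simp [Function.comp, neg_mul])

lemma tendsto_exp_neg_sq_atBot {b : ℝ} (hb : 0 < b) :
    Tendsto (fun x : ℝ => Real.exp (-b * x ^ 2)) atBot (nhds 0) := by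
  exact ((tendsto_exp_neg_sq_atTop hb).comp tendsto_neg_atBot_atTop).congr
    (fun x => by simp [Function.comp, neg_sq])

lemma tendsto_mul_exp_neg_sq_atTop {b : ℝ} (hb : 0 < b) :
    Tendsto (fun x : ℝ => x * Real.exp (-b * x ^ 2)) atTop (nhds 0) := by
  have ho := rpow_mul_exp_neg_mul_sq_isLittleO_exp_neg hb 1
  have ht : Tendsto (fun x : ℝ => Real.exp (-(1 / 2) * x)) atTop (nhds 0) := by
    have h : Tendsto (fun x : ℝ => (1:ℝ)/2 * x) atTop atTop :=
      tendsto_id.const_mul_atTop (by norm_num)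
    exact (Real.tendsto_exp_atBot.comp (tendsto_neg_atTop_atBot.comp h)).congr
      (fun x => by simp [Function.comp, neg_mul])
  have := ho.isBigO.trans_tendsto ht
  refine this.congr' ?_
  filter_upwards [eventually_gt_atTop (0:ℝ)] with x hx
  rw [Real.rpow_one]

lemma tendsto_mul_exp_neg_sq_atBot {b : ℝ} (hb : 0 < b) :
    Tendsto (fun x : ℝ => x * Real.exp (-b * x ^ 2)) atBot (nhds 0) := by
  have := ((tendsto_mul_exp_neg_sq_atTop hb).comp tendsto_neg_atBot_atTop).neg
  refine this.congr (fun x => by simp [Function.comp, neg_sq]) |>.mono_right (by simp)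

lemma integrable_sq_mul_exp_neg_sq {b : ℝ} (hb : 0 < b) :
    Integrable (fun x : ℝ => x ^ 2 * Real.exp (-b * x ^ 2)) := by
  have h := integrable_rpow_mul_exp_neg_mul_sq hb (s := 2) (by norm_num)
  exact h.congr (Filter.Eventually.of_forall fun x => by
    norm_num)

lemma integral_mul_exp_neg_sq {b : ℝ} (hb : 0 < b) :
    ∫ x : ℝ, x * Real.exp (-b * x ^ 2) = 0 := by
  have hderiv : ∀ x : ℝ, HasDerivAt (fun x : ℝ => -(2*b)⁻¹ * Real.exp (-b * x ^ 2))
      (x * Real.exp (-b * x ^ 2)) x := by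
    intro x
    have h1 : HasDerivAt (fun x : ℝ => -b * x ^ 2) (-b * (2 * x)) x := by
      simpa using ((hasDerivAt_pow 2 x).const_mul (-b))
    have := (h1.exp.const_mul (-(2*b)⁻¹))
    refine this.congr_deriv ?_
    field_simp
  have := integral_of_hasDerivAt_of_tendsto hderiv (integrable_mul_exp_neg_mul_sq hb)
    (((tendsto_exp_neg_sq_atBot hb).const_mul (-(2*b)⁻¹)))
    (((tendsto_exp_neg_sq_atTop hb).const_mul (-(2*b)⁻¹)))
  simpa using this

lemma integral_sq_mul_exp_neg_sq {b : ℝ} (hb : 0 < b) :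
    ∫ x : ℝ, x ^ 2 * Real.exp (-b * x ^ 2) = (2*b)⁻¹ * Real.sqrt (π / b) := by
  set g' : ℝ → ℝ := fun x => x ^ 2 * Real.exp (-b * x ^ 2) - (2*b)⁻¹ * Real.exp (-b * x ^ 2)
    with hg'
  have hderiv : ∀ x : ℝ, HasDerivAt (fun x : ℝ => -(2*b)⁻¹ * (x * Real.exp (-b * x ^ 2)))
      (g' x) x := by
    intro x
    have h1 : HasDerivAt (fun x : ℝ => -b * x ^ 2) (-b * (2 * x)) x := by
      simpa using ((hasDerivAt_pow 2 x).const_mul (-b))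
    have h2 := ((hasDerivAt_id x).mul h1.exp).const_mul (-(2*b)⁻¹)
    refine h2.congr_deriv ?_
    simp only [hg', id_eq]
    field_simp
    ring
  have hint : Integrable g' :=
    (integrable_sq_mul_exp_neg_sq hb).sub ((integrable_exp_neg_mul_sq hb).const_mul _)
  have hI := integral_of_hasDerivAt_of_tendsto hderiv hint
    (((tendsto_mul_exp_neg_sq_atBot hb).const_mul (-(2*b)⁻¹)))
    (((tendsto_mul_exp_neg_sq_atTop hb).const_mul (-(2*b)⁻¹)))
  simp only [mul_zero, sub_zero, sub_self] at hI
  have hsplit : ∫ x : ℝ, g' x = (∫ x : ℝ, x ^ 2 * Real.exp (-b * x ^ 2))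
      - (2*b)⁻¹ * ∫ x : ℝ, Real.exp (-b * x ^ 2) := by
    rw [hg', integral_sub (integrable_sq_mul_exp_neg_sq hb)
      ((integrable_exp_neg_mul_sq hb).const_mul _), integral_const_mul]
  rw [hsplit, integral_gaussian] at hI
  linarith [hI]

lemma deriv_fPlus (vth u : ℝ) (hvth : vth ≠ 0) (vx vy : ℝ) :
    deriv (fun t : ℝ => fPlus vth u vx t) vy
      = -(vy + u) / vth ^ 2 * fPlus vth u vx vy := by
  have ha : HasDerivAt (fun t : ℝ => t + u) 1 vy := (hasDerivAt_id vy).add_const u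
  have hb : HasDerivAt (fun t : ℝ => (t + u) ^ 2) (2 * (vy + u)) vy := by
    simpa using ha.fun_pow 2
  have hc : HasDerivAt (fun t : ℝ => -(vx ^ 2 + (t + u) ^ 2) / (2 * vth ^ 2))
      (-(2 * (vy + u)) / (2 * vth ^ 2)) vy := ((hb.const_add (vx ^ 2)).neg).div_const _
  have hd := (hc.exp).const_mul (1 / (2 * Real.pi * vth ^ 2))
  have he : HasDerivAt (fun t : ℝ => fPlus vth u vx t)
      (1 / (2 * Real.pi * vth ^ 2) *
        (Real.exp (-(vx ^ 2 + (vy + u) ^ 2) / (2 * vth ^ 2)) *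
          (-(2 * (vy + u)) / (2 * vth ^ 2)))) vy := by
    simpa [fPlus] using hd
  rw [he.deriv, fPlus]
  field_simp

lemma integrable_cexp_div_sub {ζ : ℂ} (hζ : ζ.im ≠ 0) :
    Integrable fun x : ℝ => Complex.exp (-(x : ℂ) ^ 2) / ((x : ℂ) - ζ) := by
  have hne : ∀ x : ℝ, (x : ℂ) - ζ ≠ 0 := by
    intro x h
    apply hζ
    have := congrArg Complex.im h
    simpa using this.symm
  have hmeas : Continuous fun x : ℝ => Complex.exp (-(x : ℂ) ^ 2) / ((x : ℂ) - ζ) := by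
    apply Continuous.div
    · exact Complex.continuous_exp.comp (by continuity)
    · continuity
    · exact hne
  refine Integrable.mono' (g := fun x : ℝ => |ζ.im|⁻¹ * Real.exp (-1 * x ^ 2))
    ((integrable_exp_neg_mul_sq one_pos).const_mul _) hmeas.aestronglyMeasurable ?_
  filter_upwards with x
  rw [norm_div]
  have h0 : Complex.exp (-(x : ℂ) ^ 2) = ((Real.exp (-1 * x ^ 2) : ℝ) : ℂ) := by
    rw [Complex.ofReal_exp]
    push_cast
    ring_nf
  have h1 : ‖Complex.exp (-(x : ℂ) ^ 2)‖ = Real.exp (-1 * x ^ 2) := by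
    rw [h0, Complex.norm_real, Real.norm_eq_abs, abs_of_pos (Real.exp_pos _)]
  have h2 : |ζ.im| ≤ ‖(x : ℂ) - ζ‖ := by
    have := Complex.abs_im_le_norm ((x : ℂ) - ζ)
    simpa using this
  rw [h1]
  rw [div_le_iff₀ (lt_of_lt_of_le (abs_pos.mpr hζ) h2)]
  rw [inv_mul_eq_div, div_mul_eq_mul_div, le_div_iff₀ (abs_pos.mpr hζ)]
  have := mul_le_mul_of_nonneg_left h2 (Real.exp_nonneg (-1 * x ^ 2))
  linarith


lemma double_plus (vth u : ℝ) (hvth : 0 < vth) (w : ℂ) (hw : 0 < w.im) :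
    (∫ vy : ℝ, ∫ vx : ℝ,
        (vx : ℂ) * (vy : ℂ) *
          ((deriv (fun t : ℝ => fPlus vth u vx t) vy : ℝ) : ℂ) / (w - (vx : ℂ)))
      = 1 + w / ((Real.sqrt 2 : ℂ) * (vth : ℂ)) *
          plasmaZ (w / ((Real.sqrt 2 : ℂ) * (vth : ℂ))) := by
  have hπ : (0:ℝ) < π := Real.pi_pos
  set c : ℝ := Real.sqrt 2 * vth with hc_def
  have hc : 0 < c := mul_pos (Real.sqrt_pos.mpr two_pos) hvth
  have hcC : ((c : ℝ) : ℂ) = (Real.sqrt 2 : ℂ) * (vth : ℂ) := by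
    rw [hc_def]; push_cast; ring
  rw [← hcC]
  set ζ : ℂ := w / ((c : ℝ) : ℂ) with hζ_def
  have hζim : 0 < ζ.im := by
    rw [hζ_def, Complex.div_ofReal_im]
    exact div_pos hw hc
  have hxζ : ∀ x : ℝ, (x : ℂ) - ζ ≠ 0 := by
    intro x h
    have := congrArg Complex.im h
    simp at this
    linarith
  set C : ℝ := 1 / (2 * π * vth ^ 2) with hC_def
  set b : ℝ := (2 * vth ^ 2)⁻¹ with hb_def
  have hb : 0 < b := by rw [hb_def]; positivity
  simp only [deriv_fPlus vth u hvth.ne']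
  have key : ∀ (vy vx : ℝ),
      (vx : ℂ) * (vy : ℂ) * ((-(vy + u) / vth ^ 2 * fPlus vth u vx vy : ℝ) : ℂ)
          / (w - (vx : ℂ))
        = ((vy * (-(vy + u) / vth ^ 2) * C * Real.exp (-b * (vy + u) ^ 2) : ℝ) : ℂ)
          * ((vx : ℂ) * ((Real.exp (-b * vx ^ 2) : ℝ) : ℂ) / (w - (vx : ℂ))) := by
    intro vy vx
    have hsplit : fPlus vth u vx vy
        = C * (Real.exp (-b * vx ^ 2) * Real.exp (-b * (vy + u) ^ 2)) := by
      rw [fPlus, ← Real.exp_add, hC_def, hb_def]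
      congr 1
      field_simp
      ring
    rw [hsplit]
    push_cast
    ring
  simp_rw [key, MeasureTheory.integral_const_mul]
  rw [integral_mul_const]
  have hcast : (∫ a : ℝ, ((a * (-(a + u) / vth ^ 2) * C * Real.exp (-b * (a + u) ^ 2) : ℝ) : ℂ))
      = (((∫ a : ℝ, a * (-(a + u) / vth ^ 2) * C * Real.exp (-b * (a + u) ^ 2)) : ℝ) : ℂ) :=
    integral_ofReal
  rw [hcast]
  -- compute the vy integral
  have hS : (∫ vy : ℝ, vy * (-(vy + u) / vth ^ 2) * C * Real.exp (-b * (vy + u) ^ 2))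
      = -(C / vth ^ 2) * ((2 * b)⁻¹ * Real.sqrt (π / b)) := by
    have h1 : ∀ vy : ℝ, vy * (-(vy + u) / vth ^ 2) * C * Real.exp (-b * (vy + u) ^ 2)
        = (fun t : ℝ => -(C / vth ^ 2) * (t ^ 2 * Real.exp (-b * t ^ 2))
            + u * C / vth ^ 2 * (t * Real.exp (-b * t ^ 2))) (vy + u) := by
      intro vy
      simp only
      field_simp
      ring
    simp_rw [h1]
    have h2 := MeasureTheory.integral_add_right_eq_self (μ := volume)
      (fun t : ℝ => -(C / vth ^ 2) * (t ^ 2 * Real.exp (-b * t ^ 2))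
          + u * C / vth ^ 2 * (t * Real.exp (-b * t ^ 2))) u
    rw [h2]
    rw [integral_add ((integrable_sq_mul_exp_neg_sq hb).const_mul _)
      ((integrable_mul_exp_neg_mul_sq hb).const_mul _),
      MeasureTheory.integral_const_mul, MeasureTheory.integral_const_mul,
      integral_mul_exp_neg_sq hb, integral_sq_mul_exp_neg_sq hb]
    ring
  rw [hS]
  -- compute the vx integral
  have hE : Integrable (fun x : ℝ => Complex.exp (-(x : ℂ) ^ 2)) := by
    have h0 := Complex.ofRealCLM.integrable_comp (integrable_exp_neg_mul_sq one_pos)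
    refine h0.congr (Filter.Eventually.of_forall fun x => ?_)
    simp only [Complex.ofRealCLM_apply, Complex.ofReal_exp]
    push_cast
    ring_nf
  have hG := integrable_cexp_div_sub (ne_of_gt hζim)
  have hsπ : ((Real.sqrt π : ℝ) : ℂ) ≠ 0 :=
    Complex.ofReal_ne_zero.mpr (ne_of_gt (Real.sqrt_pos.mpr hπ))
  have hIE : (∫ x : ℝ, Complex.exp (-(x : ℂ) ^ 2)) = ((Real.sqrt π : ℝ) : ℂ) := by
    have h0 : (fun x : ℝ => Complex.exp (-(x : ℂ) ^ 2))
        = fun x : ℝ => ((Real.exp (-1 * x ^ 2) : ℝ) : ℂ) := by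
      funext x
      rw [Complex.ofReal_exp]
      push_cast
      ring_nf
    have h1 : (∫ x : ℝ, ((Real.exp (-1 * x ^ 2) : ℝ) : ℂ))
        = (((∫ x : ℝ, Real.exp (-1 * x ^ 2)) : ℝ) : ℂ) := integral_ofReal
    rw [h0, h1, integral_gaussian]
    norm_num
  have hIG : (∫ x : ℝ, Complex.exp (-(x : ℂ) ^ 2) / ((x : ℂ) - ζ))
      = ((Real.sqrt π : ℝ) : ℂ) * plasmaZ ζ := by
    rw [plasmaZ, ← mul_assoc, mul_inv_cancel₀ hsπ, one_mul]
  have hJ : (∫ vx : ℝ, (vx : ℂ) * ((Real.exp (-b * vx ^ 2) : ℝ) : ℂ) / (w - (vx : ℂ)))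
      = (c : ℂ) * (-((Real.sqrt π : ℝ) : ℂ)) * (1 + ζ * plasmaZ ζ) := by
    have hsub := MeasureTheory.Measure.integral_comp_mul_left
        (fun v : ℝ => (v : ℂ) * ((Real.exp (-b * v ^ 2) : ℝ) : ℂ) / (w - (v : ℂ))) c
    rw [abs_of_pos (inv_pos.mpr hc)] at hsub
    have hJ0 : (∫ v : ℝ, (v : ℂ) * ((Real.exp (-b * v ^ 2) : ℝ) : ℂ) / (w - (v : ℂ)))
        = c • ∫ x : ℝ, ((c * x : ℝ) : ℂ) * ((Real.exp (-b * (c * x) ^ 2) : ℝ) : ℂ)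
            / (w - ((c * x : ℝ) : ℂ)) := by
      rw [hsub, smul_smul, mul_inv_cancel₀ hc.ne', one_smul]
    rw [hJ0]
    have hc2 : c ^ 2 = 2 * vth ^ 2 := by
      rw [hc_def, mul_pow, Real.sq_sqrt two_pos.le]
    have hcz : ((c : ℝ) : ℂ) * ζ = w := by
      rw [hζ_def, mul_div_cancel₀]
      exact Complex.ofReal_ne_zero.mpr hc.ne'
    have hFc : ∀ x : ℝ, ((c * x : ℝ) : ℂ) * ((Real.exp (-b * (c * x) ^ 2) : ℝ) : ℂ)
          / (w - ((c * x : ℝ) : ℂ))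
        = -(Complex.exp (-(x : ℂ) ^ 2))
          - ζ * (Complex.exp (-(x : ℂ) ^ 2) / ((x : ℂ) - ζ)) := by
      intro x
      have harg : -b * (c * x) ^ 2 = -x ^ 2 := by
        rw [hb_def, mul_pow, hc2]
        field_simp
      have hec : ((Real.exp (-b * (c * x) ^ 2) : ℝ) : ℂ) = Complex.exp (-(x : ℂ) ^ 2) := by
        rw [harg, Complex.ofReal_exp]
        push_cast
        ring_nf
      rw [hec, ← hcz]
      have hcne : ((c : ℝ) : ℂ) ≠ 0 := Complex.ofReal_ne_zero.mpr hc.ne'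
      have hden : ((c : ℝ) : ℂ) * ζ - ((c * x : ℝ) : ℂ) ≠ 0 := by
        push_cast
        intro h
        apply hxζ x
        have h2 : ((c : ℝ) : ℂ) * (ζ - (x : ℂ)) = 0 := by linear_combination h
        rcases mul_eq_zero.mp h2 with h3 | h3
        · exact absurd h3 hcne
        · linear_combination -h3
      push_cast at hden ⊢
      field_simp [hxζ x]
      have hne2 : ζ - (x : ℂ) ≠ 0 := fun h' => hxζ x (by linear_combination -h')
      rw [div_eq_iff hne2]
      ring
    simp_rw [hFc]
    have hEneg : Integrable (fun x : ℝ => -(Complex.exp (-(x : ℂ) ^ 2))) := hE.neg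
    rw [integral_sub hEneg (hG.const_mul ζ), integral_neg, MeasureTheory.integral_const_mul,
      hIE, hIG, Complex.real_smul]
    ring
  rw [hJ]
  -- final numeric identity
  have hnum : (-(C / vth ^ 2) * ((2 * b)⁻¹ * Real.sqrt (π / b))) * (c * (-Real.sqrt π)) = 1 := by
    have hb2 : (2 * b)⁻¹ = vth ^ 2 := by
      rw [hb_def]
      field_simp
    have hπb : π / b = 2 * vth ^ 2 * π := by
      rw [hb_def]
      field_simp
    have hsq : Real.sqrt (2 * vth ^ 2 * π) = Real.sqrt 2 * vth * Real.sqrt π := by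
      rw [Real.sqrt_mul (by positivity), Real.sqrt_mul (by norm_num), Real.sqrt_sq hvth.le]
    rw [hb2, hπb, hsq, hC_def, hc_def]
    have h2 : Real.sqrt 2 * Real.sqrt 2 = 2 := Real.mul_self_sqrt two_pos.le
    have hp2 : Real.sqrt π * Real.sqrt π = π := Real.mul_self_sqrt hπ.le
    field_simp
    linear_combination (Real.sqrt π * Real.sqrt π) * h2 + 2 * hp2
  have hnumC : ((-(C / vth ^ 2) * ((2 * b)⁻¹ * Real.sqrt (π / b)) : ℝ) : ℂ)
      * ((c : ℂ) * (-((Real.sqrt π : ℝ) : ℂ))) = 1 := by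
    rw [show ((c : ℂ) * (-((Real.sqrt π : ℝ) : ℂ))) = ((c * (-Real.sqrt π) : ℝ) : ℂ) by
      push_cast; ring, ← Complex.ofReal_mul, hnum, Complex.ofReal_one]
  linear_combination (1 + ζ * plasmaZ ζ) * hnumC


/-- Fourth integral in the kinetic Weibel dispersion derivation: for `Im w > 0` and
`ζ = w/(√2 v_th)`, `Σ_± ∫∫ v_x v_y (∂f^±/∂v_y)/(w − v_x) dv_x dv_y = 2(1 + ζ Z(ζ))`. -/
theorem weibel_fourth_integral
    (vth u : ℝ) (hvth : 0 < vth) (w : ℂ) (hw : 0 < w.im) :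
    ((∫ vy : ℝ, ∫ vx : ℝ,
        (vx : ℂ) * (vy : ℂ) *
          ((deriv (fun t : ℝ => fPlus vth u vx t) vy : ℝ) : ℂ) / (w - (vx : ℂ))) +
      (∫ vy : ℝ, ∫ vx : ℝ,
        (vx : ℂ) * (vy : ℂ) *
          ((deriv (fun t : ℝ => fMinus vth u vx t) vy : ℝ) : ℂ) / (w - (vx : ℂ)))) =
      2 * (1 + w / ((Real.sqrt 2 : ℂ) * (vth : ℂ)) *
        plasmaZ (w / ((Real.sqrt 2 : ℂ) * (vth : ℂ)))) := by
  have hm : fMinus vth u = fPlus vth (-u) := by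
    funext vx vy
    rw [fMinus, fPlus, sub_eq_add_neg]
  simp only [hm]
  rw [double_plus vth u hvth w hw, double_plus vth (-u) hvth w hw]
  ring
end

section
/- Maxwell's factorization theorem: let g : ℝ → ℝ be continuous and strictly positive, and suppose there exists a function F : [0,∞) → ℝ such that g(x) g(y) g(z) = F(x² + y² + z²) for all x, y, z ∈ ℝ. Then there exist constants A > 0 and B ∈ ℝ such that g(x) = A exp(B x²) for every x ∈ ℝ. -/
/-- Maxwell's factorization theorem: if `g : ℝ → ℝ` is continuous and strictly positive,
and `g(x) g(y) g(z)` depends only on `x² + y² + z²`, then `g(x) = A exp(B x²)` for some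
constants `A > 0` and `B`. -/
theorem maxwell_factorization
    (g : ℝ → ℝ) (hg : Continuous g) (hpos : ∀ x, 0 < g x)
    (F : ℝ → ℝ) (hF : ∀ x y z : ℝ, g x * g y * g z = F (x ^ 2 + y ^ 2 + z ^ 2)) :
    ∃ A B : ℝ, 0 < A ∧ ∀ x, g x = A * Real.exp (B * x ^ 2) := by
  have hcpos : 0 < g 0 := hpos 0
  set h : ℝ → ℝ := fun x => Real.log (g x) - Real.log (g 0) with hh
  have hcont : Continuous h := (hg.log fun x => (hpos x).ne').sub continuous_const
  have h0 : h 0 = 0 := by simp [hh]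
  -- key multiplicative relation
  have key : ∀ x y : ℝ, h x + h y = h (Real.sqrt (x ^ 2 + y ^ 2)) := by
    intro x y
    have hsq : Real.sqrt (x ^ 2 + y ^ 2) ^ 2 = x ^ 2 + y ^ 2 :=
      Real.sq_sqrt (by positivity)
    have e1 := hF x y 0
    have e2 := hF (Real.sqrt (x ^ 2 + y ^ 2)) 0 0
    rw [hsq] at e2
    have hgg : g x * g y * g 0 = g (Real.sqrt (x ^ 2 + y ^ 2)) * g 0 * g 0 := by
      rw [e1, e2]; ring_nf
    have hgg2 : g x * g y = g (Real.sqrt (x ^ 2 + y ^ 2)) * g 0 := by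
      have := mul_right_cancel₀ hcpos.ne' hgg
      linarith [this]
    have := congrArg Real.log hgg2
    rw [Real.log_mul (hpos x).ne' (hpos y).ne',
      Real.log_mul (hpos _).ne' hcpos.ne'] at this
    simp only [hh]; linarith
  -- g is even
  have heven : ∀ x : ℝ, g (-x) = g x := by
    intro x
    have e1 := hF x 0 0
    have e2 := hF (-x) 0 0
    rw [show (-x) ^ 2 = x ^ 2 by ring] at e2
    have : g x * g 0 * g 0 = g (-x) * g 0 * g 0 := by rw [e1, e2]
    have := mul_right_cancel₀ hcpos.ne' this
    exact (mul_right_cancel₀ hcpos.ne' this).symm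
  -- q : extend t ↦ h (√t) to an additive map on ℝ
  set q : ℝ → ℝ := fun t => if 0 ≤ t then h (Real.sqrt t) else - h (Real.sqrt (-t)) with hq
  have q0 : q 0 = 0 := by simp [hq, h0]
  have qnonneg : ∀ t, 0 ≤ t → q t = h (Real.sqrt t) := fun t ht => if_pos ht
  have qneg : ∀ t : ℝ, q (-t) = - q t := by
    intro t
    rcases lt_trichotomy t 0 with ht | rfl | ht
    · simp [hq, ht.le, not_le.mpr ht, le_of_lt (neg_pos.mpr ht)]
    · simp [q0]
    · simp [hq, ht.le, not_le.mpr (neg_neg_iff_pos.mpr ht : -t < 0)]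
  have qaddpos : ∀ s t : ℝ, 0 ≤ s → 0 ≤ t → q (s + t) = q s + q t := by
    intro s t hs ht
    rw [qnonneg s hs, qnonneg t ht, qnonneg _ (by linarith)]
    have := key (Real.sqrt s) (Real.sqrt t)
    rw [Real.sq_sqrt hs, Real.sq_sqrt ht] at this
    linarith
  have qadd : ∀ s t : ℝ, q (s + t) = q s + q t := by
    have main : ∀ s t : ℝ, 0 ≤ s → q (s + t) = q s + q t := by
      intro s t hs
      rcases le_or_gt 0 t with ht | ht
      · exact qaddpos s t hs ht
      · rcases le_or_gt 0 (s + t) with hst | hst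
        · have := qaddpos (s + t) (-t) hst (by linarith)
          simp only [add_neg_cancel_right] at this
          rw [qneg] at this; linarith
        · have := qaddpos s (-(s + t)) hs (by linarith)
          have h2 : s + -(s + t) = -t := by ring
          rw [h2, qneg, qneg] at this; linarith
    intro s t
    rcases le_or_gt 0 s with hs | hs
    · exact main s t hs
    · have := main (-s) (-t) (by linarith)
      have h2 : -s + -t = -(s + t) := by ring
      rw [h2, qneg, qneg, qneg] at this; linarith
  have qcont : Continuous q := by
    have heq : q = fun t => h (Real.sqrt (max t 0)) - h (Real.sqrt (max (-t) 0)) := by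
      funext t
      rcases le_or_gt 0 t with ht | ht
      · simp [hq, ht, max_eq_left ht, max_eq_right (neg_nonpos.mpr ht), h0]
      · simp [hq, not_le.mpr ht, max_eq_right ht.le,
          max_eq_left (neg_nonneg.mpr ht.le), h0]
    rw [heq]
    exact (hcont.comp (Real.continuous_sqrt.comp (continuous_id.max continuous_const))).sub
      (hcont.comp (Real.continuous_sqrt.comp (continuous_neg.max continuous_const)))
  -- linearity
  let Q : ℝ →+ ℝ := AddMonoidHom.mk' q qadd
  have qlin : ∀ t : ℝ, q t = q 1 * t := by
    intro t
    have := (Q.toRealLinearMap qcont).map_smul t 1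
    change q (t • (1:ℝ)) = t • q 1 at this
    simpa [Q, smul_eq_mul, mul_comm] using this
  refine ⟨g 0, q 1, hcpos, fun x => ?_⟩
  have hx : h x = q (x ^ 2) := by
    rw [qnonneg _ (sq_nonneg x), Real.sqrt_sq_eq_abs]
    rcases abs_choice x with h1 | h1
    · rw [h1]
    · rw [h1]; simp only [hh, heven]
  have : Real.log (g x) = Real.log (g 0) + q 1 * x ^ 2 := by
    have := qlin (x ^ 2); simp only [hh] at hx; linarith
  have := congrArg Real.exp this
  rwa [Real.exp_log (hpos x), Real.exp_add, Real.exp_log hcpos] at this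
end

section
/- Characterization of collisional summation invariants: let ψ : ℝ³ → ℝ be continuous, and suppose that for all v, v₁, v′, v₁′ ∈ ℝ³ satisfying the binary-collision conservation laws v + v₁ = v′ + v₁′ and ‖v‖² + ‖v₁‖² = ‖v′‖² + ‖v₁′‖², one has ψ(v) + ψ(v₁) = ψ(v′) + ψ(v₁′). Then there exist a ∈ ℝ, b ∈ ℝ³, and c ∈ ℝ such that ψ(v) = a + b·v + c‖v‖² for every v ∈ ℝ³. -/
/-- A continuous additive function on `ℝ` is linear. -/
lemma aux_cauchy (g : ℝ → ℝ) (hc : Continuous g)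
    (hadd : ∀ s t, g (s + t) = g s + g t) : ∀ t, g t = t * g 1 := by
  have h0 : g 0 = 0 := by have := hadd 0 0; simp at this; linarith
  let G : ℝ →+ ℝ := { toFun := g, map_zero' := h0, map_add' := hadd }
  have hG : Continuous G := hc
  intro t
  have h1 : (G.toRealLinearMap hG) t = G t := by
    rw [AddMonoidHom.coe_toRealLinearMap]
  have h2 : (G.toRealLinearMap hG) t = t • (G.toRealLinearMap hG) 1 := by
    rw [← (G.toRealLinearMap hG).map_smul, smul_eq_mul, mul_one]
  have h3 : (G.toRealLinearMap hG) 1 = G 1 := by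
    rw [AddMonoidHom.coe_toRealLinearMap]
  simp only [h1, h3] at h2
  simp only [smul_eq_mul] at h2; exact h2

/-- An odd function additive on same-sign pairs is additive. -/
lemma aux_signext (g : ℝ → ℝ) (hodd : ∀ t, g (-t) = - g t)
    (hadd : ∀ s t, 0 ≤ s * t → g (s + t) = g s + g t) :
    ∀ s t, g (s + t) = g s + g t := by
  intro s t
  by_cases h : 0 ≤ s * t
  · exact hadd s t h
  push_neg at h
  rcases mul_neg_iff.mp h with ⟨hs, ht⟩ | ⟨hs, ht⟩
  · by_cases h2 : 0 ≤ s + t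
    · have := hadd (s + t) (-t) (by nlinarith)
      rw [hodd] at this
      have hst : s + t + -t = s := by ring
      rw [hst] at this; linarith
    · have := hadd (s + t) (-s) (by nlinarith)
      rw [hodd] at this
      have hst : s + t + -s = t := by ring
      rw [hst] at this; linarith
  · by_cases h2 : 0 ≤ s + t
    · have := hadd (s + t) (-s) (by nlinarith)
      rw [hodd] at this
      have hst : s + t + -s = t := by ring
      rw [hst] at this; linarith
    · have := hadd (s + t) (-t) (by nlinarith)
      rw [hodd] at this
      have hst : s + t + -t = s := by ring
      rw [hst] at this; linarith

/-- A continuous function additive on nonnegative pairs is linear on `[0,∞)`. -/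
lemma aux_halfline (h : ℝ → ℝ) (hc : Continuous h)
    (hadd : ∀ s t, 0 ≤ s → 0 ≤ t → h (s + t) = h s + h t) :
    ∀ t, 0 ≤ t → h t = t * h 1 := by
  have h0 : h 0 = 0 := by have := hadd 0 0 le_rfl le_rfl; simp at this; linarith
  have key : ∀ a b c d : ℝ, 0 ≤ a → 0 ≤ b → 0 ≤ c → 0 ≤ d → a + d = c + b →
      h a - h b = h c - h d := by
    intro a b c d ha hb hc' hd habcd
    have h1 := hadd a d ha hd
    have h2 := hadd c b hc' hb
    rw [habcd] at h1
    linarith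
  set H : ℝ → ℝ := fun t => h (max t 0) - h (max (-t) 0) with hH
  have Hcont : Continuous H := by
    apply Continuous.sub
    · exact hc.comp (continuous_id.max continuous_const)
    · exact hc.comp (continuous_neg.max continuous_const)
  have Hadd : ∀ s t, H (s + t) = H s + H t := by
    intro s t
    have e1 : H (s + t) = h (max (s+t) 0) - h (max (-(s+t)) 0) := rfl
    have e2 : h (max (s+t) 0) - h (max (-(s+t)) 0)
        = h (max s 0 + max t 0) - h (max (-s) 0 + max (-t) 0) := by
      apply key ((s+t) ⊔ 0) (-(s+t) ⊔ 0) (s ⊔ 0 + t ⊔ 0) (-s ⊔ 0 + -t ⊔ 0)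
        (le_max_right _ _) (le_max_right _ _) (by positivity) (by positivity)
      have m1 : max (s+t) 0 - max (-(s+t)) 0 = s + t := by
        rcases le_total 0 (s+t) with hst | hst
        · rw [max_eq_left hst, max_eq_right (by linarith)]; ring
        · rw [max_eq_right hst, max_eq_left (by linarith)]; ring
      have m2 : max s 0 - max (-s) 0 = s := by
        rcases le_total 0 s with hs | hs
        · rw [max_eq_left hs, max_eq_right (by linarith)]; ring
        · rw [max_eq_right hs, max_eq_left (by linarith)]; ring
      have m3 : max t 0 - max (-t) 0 = t := by
        rcases le_total 0 t with hs | hs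
        · rw [max_eq_left hs, max_eq_right (by linarith)]; ring
        · rw [max_eq_right hs, max_eq_left (by linarith)]; ring
      linarith
    have e3 : h (max s 0 + max t 0) = h (max s 0) + h (max t 0) :=
      hadd _ _ (le_max_right _ _) (le_max_right _ _)
    have e4 : h (max (-s) 0 + max (-t) 0) = h (max (-s) 0) + h (max (-t) 0) :=
      hadd _ _ (le_max_right _ _) (le_max_right _ _)
    simp only [hH]
    rw [e2, e3, e4]; ring
  have Hlin := aux_cauchy H Hcont Hadd
  intro t ht
  have hHt : H t = h t := by
    simp only [hH]
    rw [max_eq_left ht, max_eq_right (by linarith), h0]; ring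
  have hH1 : H 1 = h 1 := by
    simp only [hH]
    rw [max_eq_left (by norm_num), max_eq_right (by norm_num), h0]; ring
  have := Hlin t
  rw [hHt, hH1] at this
  exact this

/-- Characterization of collisional summation invariants: a continuous `ψ : ℝ³ → ℝ`
whose two-particle sum is preserved by every elastic binary collision (conservation of
momentum and kinetic energy) is of the form `ψ(v) = a + b·v + c‖v‖²`. -/
theorem summation_invariant_characterization
    (ψ : (Fin 3 → ℝ) → ℝ) (hψ : Continuous ψ)
    (hinv : ∀ v v₁ v' v₁' : Fin 3 → ℝ,
      v + v₁ = v' + v₁' →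
      (∑ i, (v i) ^ 2) + (∑ i, (v₁ i) ^ 2) = (∑ i, (v' i) ^ 2) + (∑ i, (v₁' i) ^ 2) →
      ψ v + ψ v₁ = ψ v' + ψ v₁') :
    ∃ (a : ℝ) (b : Fin 3 → ℝ) (c : ℝ),
      ∀ v : Fin 3 → ℝ, ψ v = a + (∑ i, b i * v i) + c * ∑ i, (v i) ^ 2 := by
  -- orthogonal additivity of ψ via the collision ((x+y),0) ↦ (x,y)
  have key : ∀ x y : Fin 3 → ℝ,
      x 0 * y 0 + x 1 * y 1 + x 2 * y 2 = 0 → ψ (x + y) + ψ 0 = ψ x + ψ y := by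
    intro x y hxy
    apply hinv (x + y) 0 x y (add_zero _)
    simp only [Fin.sum_univ_three, Pi.add_apply, Pi.zero_apply]
    linear_combination 2 * hxy
  set fo : (Fin 3 → ℝ) → ℝ := fun x => (ψ x - ψ (-x)) / 2 with hfo
  set fe : (Fin 3 → ℝ) → ℝ := fun x => (ψ x + ψ (-x)) / 2 - ψ 0 with hfe
  have fo_cont : Continuous fo := ((hψ.sub (hψ.comp continuous_neg)).div_const 2)
  have fe_cont : Continuous fe :=
    ((hψ.add (hψ.comp continuous_neg)).div_const 2).sub continuous_const
  have fo_neg : ∀ x, fo (-x) = - fo x := by intro x; simp only [hfo, neg_neg]; ring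
  have fe_neg : ∀ x, fe (-x) = fe x := by intro x; simp only [hfe, neg_neg]; ring
  have keyo : ∀ x y : Fin 3 → ℝ, x 0 * y 0 + x 1 * y 1 + x 2 * y 2 = 0 →
      fo (x + y) = fo x + fo y := by
    intro x y h
    have h1 := key x y h
    have h2 := key (-x) (-y) (by simp only [Pi.neg_apply]; linear_combination h)
    rw [show (-x) + (-y) = -(x + y) by abel] at h2
    simp only [hfo]
    linarith
  have keye : ∀ x y : Fin 3 → ℝ, x 0 * y 0 + x 1 * y 1 + x 2 * y 2 = 0 →
      fe (x + y) = fe x + fe y := by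
    intro x y h
    have h1 := key x y h
    have h2 := key (-x) (-y) (by simp only [Pi.neg_apply]; linear_combination h)
    rw [show (-x) + (-y) = -(x + y) by abel] at h2
    simp only [hfe]
    linarith
  -- the even part depends only on the squared norm
  have fe_rot : ∀ u v : Fin 3 → ℝ,
      (u 0)^2 + (u 1)^2 + (u 2)^2 = (v 0)^2 + (v 1)^2 + (v 2)^2 → fe u = fe v := by
    have fe_rot2 : ∀ u v : Fin 3 → ℝ,
        (u 0)^2 + (u 1)^2 + (u 2)^2 = (v 0)^2 + (v 1)^2 + (v 2)^2 →
        fe (u + u) = fe (v + v) := by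
      intro u v h
      have h1 := keye (u + v) (u - v) (by
        simp only [Pi.add_apply, Pi.sub_apply]; linear_combination h)
      have h2 := keye (v + u) (v - u) (by
        simp only [Pi.add_apply, Pi.sub_apply]; linear_combination -h)
      rw [show (u + v) + (u - v) = u + u by abel] at h1
      rw [show (v + u) + (v - u) = v + v by abel] at h2
      rw [show v - u = -(u - v) by abel, fe_neg, show v + u = u + v by abel] at h2
      linarith
    intro u v h
    have h2 := fe_rot2 ((1/2 : ℝ) • u) ((1/2 : ℝ) • v) (by
      simp only [Pi.smul_apply, smul_eq_mul]; linear_combination h / 4)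
    rwa [show (1/2 : ℝ) • u + (1/2 : ℝ) • u = u by module,
         show (1/2 : ℝ) • v + (1/2 : ℝ) • v = v by module] at h2
  -- basis vectors
  set E0 : Fin 3 → ℝ := ![1, 0, 0] with hE0def
  set E1 : Fin 3 → ℝ := ![0, 1, 0] with hE1def
  set E2 : Fin 3 → ℝ := ![0, 0, 1] with hE2def
  -- even part: radial profile
  set ch : ℝ → ℝ := fun t => fe (Real.sqrt t • E0) with hch
  have ch_cont : Continuous ch :=
    fe_cont.comp (Real.continuous_sqrt.smul continuous_const)
  have ch_add : ∀ s t : ℝ, 0 ≤ s → 0 ≤ t → ch (s + t) = ch s + ch t := by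
    intro s t hs ht
    have hss := Real.sq_sqrt hs
    have hts := Real.sq_sqrt ht
    have hstt := Real.sq_sqrt (by positivity : (0:ℝ) ≤ s + t)
    have r1 : fe (Real.sqrt (s + t) • E0)
        = fe (Real.sqrt s • E0 + Real.sqrt t • E1) := by
      apply fe_rot
      simp only [Pi.add_apply, Pi.smul_apply, smul_eq_mul, hE0def, hE1def,
        Matrix.cons_val_zero, Matrix.cons_val_one, Matrix.head_cons,
        Matrix.cons_val_two, Matrix.tail_cons]
      linear_combination hstt - hss - hts
    have r2 := keye (Real.sqrt s • E0) (Real.sqrt t • E1) (by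
      simp only [Pi.smul_apply, smul_eq_mul, hE0def, hE1def,
        Matrix.cons_val_zero, Matrix.cons_val_one, Matrix.head_cons,
        Matrix.cons_val_two, Matrix.tail_cons]
      ring)
    have r3 : fe (Real.sqrt t • E1) = fe (Real.sqrt t • E0) := by
      apply fe_rot
      simp only [Pi.smul_apply, smul_eq_mul, hE0def, hE1def,
        Matrix.cons_val_zero, Matrix.cons_val_one, Matrix.head_cons,
        Matrix.cons_val_two, Matrix.tail_cons]
      ring
    simp only [hch]
    rw [r1, r2, r3]
  have fe_eq : ∀ x : Fin 3 → ℝ, fe x = ((x 0)^2 + (x 1)^2 + (x 2)^2) * ch 1 := by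
    intro x
    have hQ : (0:ℝ) ≤ (x 0)^2 + (x 1)^2 + (x 2)^2 := by positivity
    have h1 : fe x = ch ((x 0)^2 + (x 1)^2 + (x 2)^2) := by
      simp only [hch]
      apply fe_rot
      simp only [Pi.smul_apply, smul_eq_mul, hE0def,
        Matrix.cons_val_zero, Matrix.cons_val_one, Matrix.head_cons,
        Matrix.cons_val_two, Matrix.tail_cons]
      rw [mul_one, mul_zero, Real.sq_sqrt hQ]
      ring
    rw [h1]
    exact aux_halfline ch ch_cont ch_add _ hQ
  -- the odd part is linear on each axis
  have axis : ∀ u w : Fin 3 → ℝ,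
      u 0 * w 0 + u 1 * w 1 + u 2 * w 2 = 0 →
      (u 0)^2 + (u 1)^2 + (u 2)^2 = 1 →
      (w 0)^2 + (w 1)^2 + (w 2)^2 = 1 →
      ∀ t : ℝ, fo (t • u) = t * fo u := by
    intro u w hd hu hw
    have hadd0 : ∀ s t : ℝ, 0 ≤ s * t →
        fo ((s + t) • u) = fo (s • u) + fo (t • u) := by
      intro s t hst
      set β := Real.sqrt (s * t) with hβdef
      have hβ : β ^ 2 = s * t := Real.sq_sqrt hst
      have h1 := keyo (s • u + β • w) (t • u - β • w) (by
        simp only [Pi.add_apply, Pi.sub_apply, Pi.smul_apply, smul_eq_mul]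
        linear_combination s * t * hu - β ^ 2 * hw + (t - s) * β * hd - hβ)
      rw [show (s • u + β • w) + (t • u - β • w) = (s + t) • u by module] at h1
      have h2 := keyo (s • u) (β • w) (by
        simp only [Pi.smul_apply, smul_eq_mul]
        linear_combination s * β * hd)
      have h3 := keyo (t • u) (-(β • w)) (by
        simp only [Pi.neg_apply, Pi.smul_apply, smul_eq_mul]
        linear_combination (-t) * β * hd)
      rw [show t • u - β • w = t • u + -(β • w) from sub_eq_add_neg _ _] at h1
      rw [fo_neg] at h3
      linarith
    have hfull := aux_signext (fun t => fo (t • u))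
      (fun t => by
        show fo ((-t) • u) = - fo (t • u)
        rw [neg_smul, fo_neg]) hadd0
    have gcont : Continuous (fun t : ℝ => fo (t • u)) :=
      fo_cont.comp (continuous_id.smul continuous_const)
    have hl := aux_cauchy _ gcont hfull
    intro t
    have := hl t
    rwa [one_smul] at this
  have b0 := axis E0 E1 (by norm_num [hE0def, hE1def, Matrix.cons_val_two, Matrix.tail_cons, Matrix.head_cons]) (by norm_num [hE0def, Matrix.cons_val_two, Matrix.tail_cons, Matrix.head_cons])
    (by norm_num [hE1def, Matrix.cons_val_two, Matrix.tail_cons, Matrix.head_cons])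
  have b1 := axis E1 E0 (by norm_num [hE0def, hE1def, Matrix.cons_val_two, Matrix.tail_cons, Matrix.head_cons]) (by norm_num [hE1def, Matrix.cons_val_two, Matrix.tail_cons, Matrix.head_cons])
    (by norm_num [hE0def, Matrix.cons_val_two, Matrix.tail_cons, Matrix.head_cons])
  have b2 := axis E2 E0 (by norm_num [hE0def, hE2def, Matrix.cons_val_two, Matrix.tail_cons, Matrix.head_cons]) (by norm_num [hE2def, Matrix.cons_val_two, Matrix.tail_cons, Matrix.head_cons])
    (by norm_num [hE0def, Matrix.cons_val_two, Matrix.tail_cons, Matrix.head_cons])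
  have decomp : ∀ x : Fin 3 → ℝ,
      fo x = x 0 * fo E0 + x 1 * fo E1 + x 2 * fo E2 := by
    intro x
    have hx : x = x 0 • E0 + (x 1 • E1 + x 2 • E2) := by
      funext i
      fin_cases i <;>
        simp [hE0def, hE1def, hE2def]
    have h1 := keyo (x 0 • E0) (x 1 • E1 + x 2 • E2) (by
      norm_num [hE0def, hE1def, hE2def, Matrix.cons_val_two, Matrix.tail_cons, Matrix.head_cons])
    have h2 := keyo (x 1 • E1) (x 2 • E2) (by
      norm_num [hE1def, hE2def, Matrix.cons_val_two, Matrix.tail_cons, Matrix.head_cons])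
    rw [← hx] at h1
    rw [h1, h2, b0, b1, b2]; ring
  refine ⟨ψ 0, ![fo E0, fo E1, fo E2], ch 1, fun v => ?_⟩
  have hsplit : ψ v = ψ 0 + fo v + fe v := by
    simp only [hfo, hfe]; ring
  rw [hsplit, decomp v, fe_eq v]
  simp only [Fin.sum_univ_three, Matrix.cons_val_zero, Matrix.cons_val_one,
    Matrix.head_cons, Matrix.cons_val_two, Matrix.tail_cons]
  ring
end

section
/- Dimension of the Serendipity polynomial space: for integers d ≥ 1 and p ≥ 1, the number of multi-indices a ∈ ℕ^d whose superlinear order Σ_{j : a_j ≥ 2} a_j is at most p equals Σ_{i=0}^{min(d, ⌊p/2⌋)} 2^{d−i} · C(d, i) · C(p − i, i), where C denotes the binomial coefficient. -/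
lemma aux_sum_le (σ : Type*) [Fintype σ] [DecidableEq σ] (m : ℕ) :
    Nat.card {g : σ → ℕ // ∑ j, g j ≤ m} =
      (m + Fintype.card σ).choose (Fintype.card σ) := by
  have e : {g : σ → ℕ // ∑ j, g j ≤ m} ≃ Sym (Option σ) m := by
    refine Equiv.trans ?_ (Sym.equivNatSumOfFintype (Option σ) m).symm
    refine
      { toFun := fun g => ⟨fun o => o.elim (m - ∑ j, g.1 j) g.1, ?_⟩
        invFun := fun h => ⟨fun j => h.1 (some j), ?_⟩
        left_inv := ?_, right_inv := ?_ }
    · have := g.2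
      rw [Fintype.sum_option]
      simp only [Option.elim]
      omega
    · have := h.2
      rw [Fintype.sum_option] at this
      show ∑ j, h.1 (some j) ≤ m
      omega
    · intro g; ext j; rfl
    · intro h
      have := h.2
      rw [Fintype.sum_option] at this
      ext o
      cases o with
      | none => simp only [Option.elim]; omega
      | some j => rfl
  rw [Nat.card_congr e, Nat.card_eq_fintype_card, Sym.card_sym_eq_multichoose,
    Nat.multichoose_eq, Fintype.card_option]
  rw [show Fintype.card σ + 1 + m - 1 = m + Fintype.card σ from by omega]
  exact Nat.choose_symm_of_eq_add rfl

lemma aux_ge_two (σ : Type*) [Fintype σ] [DecidableEq σ] (p : ℕ) :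
    Nat.card {f : σ → ℕ // (∀ j, 2 ≤ f j) ∧ ∑ j, f j ≤ p} =
      (p - Fintype.card σ).choose (Fintype.card σ) := by
  set i := Fintype.card σ with hi
  have hconst : ∀ f : σ → ℕ, (∀ j, 2 ≤ f j) → 2 * i ≤ ∑ j, f j := by
    intro f hf
    calc 2 * i = ∑ _j : σ, 2 := by
          rw [Finset.sum_const, Finset.card_univ, smul_eq_mul, ← hi, mul_comm]
      _ ≤ ∑ j, f j := Finset.sum_le_sum fun j _ => hf j
  by_cases h : 2 * i ≤ p
  · have e : {f : σ → ℕ // (∀ j, 2 ≤ f j) ∧ ∑ j, f j ≤ p} ≃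
        {g : σ → ℕ // ∑ j, g j ≤ p - 2 * i} := by
      refine
        { toFun := fun f => ⟨fun j => f.1 j - 2, ?_⟩
          invFun := fun g => ⟨fun j => g.1 j + 2, ?_⟩
          left_inv := ?_, right_inv := ?_ }
      · obtain ⟨f, hf, hfs⟩ := f
        have key : ∑ j, (f j - 2) + 2 * i = ∑ j, f j := by
          have : ∑ j, (f j - 2) + ∑ _j : σ, 2 = ∑ j, f j := by
            rw [← Finset.sum_add_distrib]
            exact Finset.sum_congr rfl fun j _ => Nat.sub_add_cancel (hf j)
          rwa [Finset.sum_const, Finset.card_univ, smul_eq_mul, ← hi, mul_comm] at this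
        show ∑ j, (f j - 2) ≤ p - 2 * i
        omega
      · obtain ⟨g, hg⟩ := g
        constructor
        · intro j; show 2 ≤ g j + 2; omega
        · show ∑ j, (g j + 2) ≤ p
          rw [Finset.sum_add_distrib, Finset.sum_const, Finset.card_univ, smul_eq_mul, ← hi]
          omega
      · rintro ⟨f, hf, hfs⟩
        ext j
        exact Nat.sub_add_cancel (hf j)
      · rintro ⟨g, hg⟩
        ext j
        simp
    rw [Nat.card_congr e, aux_sum_le, ← hi,
      show p - 2 * i + i = p - i from by omega]
  · have : IsEmpty {f : σ → ℕ // (∀ j, 2 ≤ f j) ∧ ∑ j, f j ≤ p} := by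
      refine ⟨fun f => ?_⟩
      have := hconst f.1 f.2.1
      have := f.2.2
      omega
    rw [Nat.card_of_isEmpty, Nat.choose_eq_zero_of_lt (by omega)]

lemma aux_fiber (d p : ℕ) (S : Finset (Fin d)) :
    Nat.card {a : Fin d → ℕ // (∀ j, j ∈ S ↔ 2 ≤ a j) ∧ ∑ j ∈ S, a j ≤ p} =
      2 ^ (d - S.card) * (p - S.card).choose S.card := by
  classical
  have e1 : {a : Fin d → ℕ // (∀ j, j ∈ S ↔ 2 ≤ a j) ∧ ∑ j ∈ S, a j ≤ p} ≃
      {x : (∀ _j : {j : Fin d // j ∈ S}, ℕ) × (∀ _j : {j : Fin d // ¬ j ∈ S}, ℕ) //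
        ((∀ j, 2 ≤ x.1 j) ∧ ∑ j, x.1 j ≤ p) ∧ (∀ j, x.2 j < 2)} := by
    refine (Equiv.piEquivPiSubtypeProd (· ∈ S) fun _ => ℕ).subtypeEquiv fun a => ?_
    constructor
    · rintro ⟨h1, h2⟩
      refine ⟨⟨fun j => (h1 j.1).mp j.2, ?_⟩, fun j => ?_⟩
      · show ∑ j : {j : Fin d // j ∈ S}, a j.1 ≤ p
        rw [Finset.sum_coe_sort S a]
        exact h2
      · show a j.1 < 2
        by_contra hc
        push_neg at hc
        exact j.2 ((h1 j.1).mpr hc)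
    · rintro ⟨⟨h1, h2⟩, h3⟩
      constructor
      · intro j
        constructor
        · intro hj; exact h1 ⟨j, hj⟩
        · intro hj
          by_contra hn
          have h4 : a j < 2 := h3 ⟨j, hn⟩
          omega
      · have h2' : ∑ j : {j : Fin d // j ∈ S}, a j.1 ≤ p := h2
        rwa [Finset.sum_coe_sort S a] at h2'
  rw [Nat.card_congr (e1.trans (Equiv.subtypeProdEquivProd (p := fun f : ∀ _j : {j : Fin d // j ∈ S}, ℕ => (∀ j, 2 ≤ f j) ∧ ∑ j, f j ≤ p) (q := fun g : ∀ _j : {j : Fin d // ¬ j ∈ S}, ℕ => ∀ j, g j < 2))), Nat.card_prod,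
    aux_ge_two, Fintype.card_coe]
  have e3 : {g : ∀ _j : {j : Fin d // ¬ j ∈ S}, ℕ // ∀ j, g j < 2} ≃
      ∀ _j : {j : Fin d // ¬ j ∈ S}, {n : ℕ // n < 2} := Equiv.subtypePiEquivPi (p := fun _ n => n < 2)
  rw [Nat.card_congr e3, Nat.card_pi]
  have h2 : Nat.card {n : ℕ // n < 2} = 2 := by
    rw [← Nat.card_congr (Fin.equivSubtype (n := 2)), Nat.card_eq_fintype_card,
      Fintype.card_fin]
  simp only [h2, Finset.prod_const, Finset.card_univ]
  rw [Fintype.card_subtype_compl, Fintype.card_fin, Fintype.card_coe, mul_comm]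

/-- Dimension of the Serendipity polynomial space: for `d ≥ 1` and `p ≥ 1`, the number
of multi-indices `a ∈ ℕ^d` whose superlinear order `Σ_{j : a_j ≥ 2} a_j` is at most `p`
equals `Σ_{i=0}^{min(d, ⌊p/2⌋)} 2^{d−i} C(d,i) C(p−i,i)`. -/
theorem serendipity_dimension (d p : ℕ) (hd : 1 ≤ d) (hp : 1 ≤ p) :
    {a : Fin d → ℕ | (∑ j, if 2 ≤ a j then a j else 0) ≤ p}.ncard =
      ∑ i ∈ Finset.range (min d (p / 2) + 1),
        2 ^ (d - i) * Nat.choose d i * Nat.choose (p - i) i := by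
  classical
  set T : Finset (Fin d → ℕ) :=
    (Fintype.piFinset fun _ => Finset.range (p + 1)).filter
      (fun a => ∑ j, (if 2 ≤ a j then a j else 0) ≤ p) with hT
  have hset : {a : Fin d → ℕ | (∑ j, if 2 ≤ a j then a j else 0) ≤ p} = ↑T := by
    ext a
    simp only [Set.mem_setOf_eq, hT, Finset.coe_filter, Fintype.mem_piFinset,
      Finset.mem_range]
    constructor
    · intro h
      refine ⟨fun j => ?_, h⟩
      by_cases hj : 2 ≤ a j
      · have hle : (if 2 ≤ a j then a j else 0) ≤ ∑ j, (if 2 ≤ a j then a j else 0) :=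
          Finset.single_le_sum (f := fun j => if 2 ≤ a j then a j else 0)
            (fun k _ => Nat.zero_le _) (Finset.mem_univ j)
        rw [if_pos hj] at hle
        omega
      · omega
    · exact fun h => h.2
  rw [hset, Set.ncard_coe_finset]
  rw [Finset.card_eq_sum_card_fiberwise
    (f := fun a => Finset.univ.filter fun j => 2 ≤ a j) (t := Finset.univ)
    (fun a _ => Finset.mem_univ _)]
  have hfib : ∀ S : Finset (Fin d),
      (T.filter fun a => Finset.univ.filter (fun j => 2 ≤ a j) = S).card =
        2 ^ (d - S.card) * (p - S.card).choose S.card := by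
    intro S
    have hcoe : ↑(T.filter fun a => Finset.univ.filter (fun j => 2 ≤ a j) = S) =
        {a : Fin d → ℕ | (∀ j, j ∈ S ↔ 2 ≤ a j) ∧ ∑ j ∈ S, a j ≤ p} := by
      ext a
      simp only [hT, Finset.coe_filter, Set.mem_setOf_eq, Finset.mem_filter,
        Fintype.mem_piFinset, Finset.mem_range]
      constructor
      · rintro ⟨⟨hbd, hsum⟩, hS⟩
        have hiff : ∀ j, j ∈ S ↔ 2 ≤ a j := by
          intro j
          rw [← hS]
          simp
        refine ⟨hiff, ?_⟩
        have hss : ∑ j ∈ S, a j = ∑ j, (if 2 ≤ a j then a j else 0) := by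
          rw [← hS, Finset.sum_filter]
        omega
      · rintro ⟨hiff, hsum⟩
        have hS : Finset.univ.filter (fun j => 2 ≤ a j) = S := by
          ext j
          simp [← hiff j]
        have hsum' : ∑ j, (if 2 ≤ a j then a j else 0) ≤ p := by
          rw [← Finset.sum_filter, hS]
          exact hsum
        refine ⟨⟨fun j => ?_, hsum'⟩, hS⟩
        by_cases hj : j ∈ S
        · have hle : a j ≤ ∑ j ∈ S, a j :=
            Finset.single_le_sum (fun k _ => Nat.zero_le _) hj
          omega
        · have hlt : ¬ 2 ≤ a j := fun hc => hj ((hiff j).mpr hc)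
          omega
    calc (T.filter fun a => Finset.univ.filter (fun j => 2 ≤ a j) = S).card
        = (↑(T.filter fun a => Finset.univ.filter (fun j => 2 ≤ a j) = S) :
            Set (Fin d → ℕ)).ncard := (Set.ncard_coe_finset _).symm
      _ = Nat.card {a : Fin d → ℕ // (∀ j, j ∈ S ↔ 2 ≤ a j) ∧ ∑ j ∈ S, a j ≤ p} := by
          rw [hcoe, ← Nat.card_coe_set_eq, Set.coe_setOf]
      _ = 2 ^ (d - S.card) * (p - S.card).choose S.card := aux_fiber d p S
  rw [Finset.sum_congr rfl fun S _ => hfib S]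
  have hpow : (Finset.univ : Finset (Finset (Fin d))) =
      (Finset.univ : Finset (Fin d)).powerset := Finset.powerset_univ.symm
  rw [hpow, Finset.powerset_card_disjiUnion]
  erw [Finset.sum_disjiUnion]
  have hinner : ∀ i, ∑ S ∈ Finset.powersetCard i (Finset.univ : Finset (Fin d)),
      2 ^ (d - S.card) * (p - S.card).choose S.card =
      d.choose i * (2 ^ (d - i) * (p - i).choose i) := by
    intro i
    rw [Finset.sum_congr rfl
      (fun S hS => by rw [(Finset.mem_powersetCard.mp hS).2]),
      Finset.sum_const, Finset.card_powersetCard, Finset.card_univ,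
      Fintype.card_fin, smul_eq_mul]
  rw [Finset.sum_congr rfl fun i _ => hinner i, Finset.card_univ, Fintype.card_fin]
  rw [Finset.sum_congr rfl
    (fun i _ => by ring :
      ∀ i ∈ Finset.range (d + 1), d.choose i * (2 ^ (d - i) * (p - i).choose i) =
        2 ^ (d - i) * d.choose i * (p - i).choose i)]
  refine (Finset.sum_subset ?_ ?_).symm
  · intro i hi
    simp only [Finset.mem_range] at hi ⊢
    omega
  · intro i hi hni
    simp only [Finset.mem_range] at hi hni
    have h1 : p - i < i := by omega
    rw [Nat.choose_eq_zero_of_lt h1, mul_zero]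
end

section
/- Bohm sheath criterion: for M > 0 define g_M : [0,∞) → ℝ by g_M(χ) = M² ( √(1 + 2χ/M²) − 1 ) + e^{−χ} − 1. Then: (i) if M ≥ 1, then g_M(χ) ≥ 0 for every χ ≥ 0; and (ii) conversely, if there exists δ > 0 such that g_M(χ) ≥ 0 for all χ ∈ (0, δ), then M ≥ 1. -/
-- exp(x) ≥ √(1+2x) for x ≥ 0
lemma aux_sqrt_le_exp (x : ℝ) (hx : 0 ≤ x) : Real.sqrt (1 + 2*x) ≤ Real.exp x := by
  have h1 : 1 + 2*x ≤ Real.exp (2*x) := by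
    have := Real.add_one_le_exp (2*x); linarith
  have h2 : Real.exp (2*x) = (Real.exp x)^2 := by
    rw [← Real.exp_nat_mul]; ring_nf
  calc Real.sqrt (1+2*x) ≤ Real.sqrt ((Real.exp x)^2) := by
        apply Real.sqrt_le_sqrt; rw [← h2]; exact h1
    _ = Real.exp x := Real.sqrt_sq (Real.exp_pos x).le

-- key calculus lemma: √(1+2x) + e^{-x} ≥ 2 for x ≥ 0
lemma aux_key (x : ℝ) (hx : 0 ≤ x) : 2 ≤ Real.sqrt (1 + 2*x) + Real.exp (-x) := by
  set f : ℝ → ℝ := fun y => Real.sqrt (1 + 2*y) + Real.exp (-y) with hf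
  have hmono : MonotoneOn f (Set.Ici (0:ℝ)) := by
    have hderiv : ∀ y : ℝ, 0 < y →
        HasDerivAt f (1 / Real.sqrt (1 + 2*y) - Real.exp (-y)) y := by
      intro y hy
      have hpos : (0:ℝ) < 1 + 2*y := by linarith
      have h1 : HasDerivAt (fun z : ℝ => 1 + 2*z) 2 y := by
        simpa using ((hasDerivAt_id y).const_mul 2).const_add 1
      have h2 : HasDerivAt (fun z : ℝ => Real.sqrt (1 + 2*z))
          (1 / (2 * Real.sqrt (1 + 2*y)) * 2) y :=
        (Real.hasDerivAt_sqrt hpos.ne').comp y h1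
      have h3 : HasDerivAt (fun z : ℝ => Real.exp (-z)) (-Real.exp (-y)) y := by
        have := (hasDerivAt_neg y).exp
        convert this using 1
        ring
      have := h2.add h3
      have hs : 0 < Real.sqrt (1 + 2*y) := Real.sqrt_pos.mpr hpos
      exact this.congr_deriv (by ring)
    apply monotoneOn_of_deriv_nonneg (convex_Ici 0)
    · apply ContinuousOn.add
      · exact (Real.continuous_sqrt.comp (by continuity)).continuousOn
      · exact (Real.continuous_exp.comp continuous_neg).continuousOn
    · intro y hy
      rw [interior_Ici] at hy
      have hy' : (0:ℝ) < y := hy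
      exact (hderiv y hy').differentiableAt.differentiableWithinAt
    · intro y hy
      rw [interior_Ici] at hy
      have hy' : (0:ℝ) < y := hy
      rw [(hderiv y hy').deriv]
      have hs : 0 < Real.sqrt (1 + 2*y) := Real.sqrt_pos.mpr (by linarith)
      have hle : Real.sqrt (1 + 2*y) ≤ Real.exp y := aux_sqrt_le_exp y hy'.le
      have : Real.exp (-y) ≤ 1 / Real.sqrt (1 + 2*y) := by
        rw [Real.exp_neg, le_div_iff₀ hs, inv_mul_eq_div, div_le_one (Real.exp_pos y)]
        exact hle
      linarith
  have := hmono (Set.self_mem_Ici) (Set.mem_Ici.mpr hx) hx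
  have h0 : f 0 = 2 := by
    simp [hf, Real.sqrt_one]; norm_num
  rw [h0] at this
  simpa [hf] using this

-- e^{-x} ≤ 1 - x + x²/2 for x ≥ 0
lemma aux_exp_neg_le (x : ℝ) (hx : 0 ≤ x) : Real.exp (-x) ≤ 1 - x + x^2/2 := by
  have hsum : 1 + x + x^2/2 + x^3/6 ≤ Real.exp x := by
    have := Real.sum_le_exp_of_nonneg hx 4
    norm_num [Finset.sum_range_succ, Nat.factorial] at this
    linarith
  have hq : (0:ℝ) < 1 - x + x^2/2 := by nlinarith [sq_nonneg (x-1)]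
  rw [Real.exp_neg, inv_eq_one_div, div_le_iff₀ (Real.exp_pos x)]
  nlinarith [mul_le_mul_of_nonneg_left hsum hq.le, pow_nonneg hx 3, pow_nonneg hx 4, pow_nonneg hx 5]

-- √(1+t) ≤ 1 + t/2 - t²/8 + t³/16 for t ≥ 0
lemma aux_sqrt_ub (t : ℝ) (ht : 0 ≤ t) :
    Real.sqrt (1 + t) ≤ 1 + t/2 - t^2/8 + t^3/16 := by
  have hp : 0 ≤ 1 + t/2 - t^2/8 + t^3/16 := by
    nlinarith [sq_nonneg (t-2), mul_nonneg ht (sq_nonneg (t-2)), sq_nonneg t]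
  have hle : 1 + t ≤ (1 + t/2 - t^2/8 + t^3/16)^2 := by
    have h1 : (0:ℝ) ≤ t^2 - 4*t + 20 := by nlinarith [sq_nonneg (t-2)]
    nlinarith [mul_nonneg (pow_nonneg ht 4) h1]
  calc Real.sqrt (1+t) ≤ Real.sqrt ((1 + t/2 - t^2/8 + t^3/16)^2) :=
        Real.sqrt_le_sqrt hle
    _ = 1 + t/2 - t^2/8 + t^3/16 := Real.sqrt_sq hp

/-- Bohm sheath criterion: with
`g_M(χ) = M²(√(1 + 2χ/M²) − 1) + e^{−χ} − 1`, (i) if `M ≥ 1` then `g_M ≥ 0` on `[0,∞)`;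
(ii) conversely, if `g_M ≥ 0` on some interval `(0, δ)` with `δ > 0`, then `M ≥ 1`. -/
theorem bohm_sheath_criterion (M : ℝ) (hM : 0 < M) :
    (1 ≤ M → ∀ χ : ℝ, 0 ≤ χ →
      0 ≤ M ^ 2 * (Real.sqrt (1 + 2 * χ / M ^ 2) - 1) + Real.exp (-χ) - 1) ∧
    ((∃ δ > 0, ∀ χ ∈ Set.Ioo (0 : ℝ) δ,
        0 ≤ M ^ 2 * (Real.sqrt (1 + 2 * χ / M ^ 2) - 1) + Real.exp (-χ) - 1) → 1 ≤ M) := by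
  have hM2pos : (0:ℝ) < M^2 := by positivity
  constructor
  · -- part (i)
    intro h1M χ hχ
    have hM2 : (1:ℝ) ≤ M^2 := by nlinarith
    have harg1 : (0:ℝ) ≤ 1 + 2*χ/M^2 := by positivity
    have harg2 : (0:ℝ) ≤ 1 + 2*χ := by linarith
    set s₁ := Real.sqrt (1 + 2*χ/M^2) with hs₁
    set s₂ := Real.sqrt (1 + 2*χ) with hs₂
    have hs1sq : s₁^2 = 1 + 2*χ/M^2 := Real.sq_sqrt harg1
    have hs2sq : s₂^2 = 1 + 2*χ := Real.sq_sqrt harg2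
    have hs1ge1 : 1 ≤ s₁ := by
      rw [show (1:ℝ) = Real.sqrt 1 from (Real.sqrt_one).symm]
      apply Real.sqrt_le_sqrt
      have := div_nonneg (by linarith : (0:ℝ) ≤ 2*χ) hM2pos.le
      linarith
    have hs12 : s₁ ≤ s₂ := by
      apply Real.sqrt_le_sqrt
      have : 2*χ/M^2 ≤ 2*χ := div_le_self (by linarith) hM2
      linarith
    have hA : M^2*(s₁^2-1) = 2*χ := by
      rw [hs1sq]; field_simp; ring
    have hB : s₂^2 - 1 = 2*χ := by rw [hs2sq]; ring
    have key : s₂ - 1 ≤ M^2*(s₁-1) := by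
      nlinarith [mul_nonneg (by linarith : (0:ℝ) ≤ s₂ - 1) (by linarith : (0:ℝ) ≤ s₂ - s₁),
        hA, hB, hs1ge1]
    have hk := aux_key χ hχ
    rw [← hs₂] at hk
    linarith
  · -- part (ii)
    rintro ⟨δ, hδ, hg⟩
    by_contra hcon
    push_neg at hcon
    have hM2lt : M^2 < 1 := by nlinarith
    set χ₀ : ℝ := min (δ/2) (M^2*(1-M^2)/2) with hχ₀
    have hχ₀pos : 0 < χ₀ := lt_min (by linarith) (by nlinarith)
    have hχ₀δ : χ₀ < δ := lt_of_le_of_lt (min_le_left _ _) (by linarith)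
    have hχ₀le : χ₀ ≤ M^2*(1-M^2)/2 := min_le_right _ _
    have hg0 := hg χ₀ ⟨hχ₀pos, hχ₀δ⟩
    set t : ℝ := 2*χ₀/M^2 with htdef
    have ht : 0 ≤ t := by positivity
    have hsq := aux_sqrt_ub t ht
    have hub : M^2 * (Real.sqrt (1 + 2*χ₀/M^2) - 1)
        ≤ χ₀ - χ₀^2/(2*M^2) + χ₀^3/(2*M^4) := by
      have h1 : M^2 * (Real.sqrt (1 + t) - 1) ≤ M^2 * (t/2 - t^2/8 + t^3/16) :=
        mul_le_mul_of_nonneg_left (by linarith) hM2pos.le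
      have h2 : M^2 * (t/2 - t^2/8 + t^3/16) = χ₀ - χ₀^2/(2*M^2) + χ₀^3/(2*M^4) := by
        rw [htdef]; field_simp; ring
      calc M^2 * (Real.sqrt (1 + 2*χ₀/M^2) - 1) = M^2 * (Real.sqrt (1+t) - 1) := by
            rw [htdef]
        _ ≤ M^2 * (t/2 - t^2/8 + t^3/16) := h1
        _ = _ := h2
    have hexp := aux_exp_neg_le χ₀ hχ₀pos.le
    have hfin : 0 ≤ χ₀^2/2 - χ₀^2/(2*M^2) + χ₀^3/(2*M^4) := by
      rw [show (1 + 2 * χ₀ / M ^ 2) = (1 + 2*χ₀/M^2) by ring,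
        show M ^ 2 = M^2 by ring] at hg0
      linarith
    have h2 : 0 ≤ 2*M^4 * (χ₀^2/2 - χ₀^2/(2*M^2) + χ₀^3/(2*M^4)) :=
      mul_nonneg (by positivity) hfin
    have h3 : 2*M^4 * (χ₀^2/2 - χ₀^2/(2*M^2) + χ₀^3/(2*M^4))
        = M^4*χ₀^2 - M^2*χ₀^2 + χ₀^3 := by
      field_simp
    rw [h3] at h2
    nlinarith [mul_le_mul_of_nonneg_left hχ₀le (mul_pos hχ₀pos hχ₀pos).le,
      mul_pos (mul_pos hχ₀pos hχ₀pos) hM2pos, hM2lt]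
end
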